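/- arXiv:1306.1094 — 7 statements merged into one kernel-verified Lean document; each statement's English description precedes it below -/
import Mathlib

section
/- For every complex number ζ with (Re ζ)² ≥ (Im ζ)² and every natural number N ≥ 1, the infinite product satisfies |P(ζ)| ≥ |ζ|^(2N) / (μ_1 · μ_2 · ⋯ · μ_N)². -/
set_option maxHeartbeats 1000000 in
/-- Let `(μ_p)` be a sequence of positive reals with `∑ 1/μ_p² < ∞` and
`P(ζ) = ∏_{p} (1 + ζ²/μ_p²)`. For every `ζ ∈ ℂ` with `(Re ζ)² ≥ (Im ζ)²` and every `N ≥ 1`,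
`|P(ζ)| ≥ |ζ|^(2N) / (μ_1 ⋯ μ_N)²`. (Here the sequence is indexed by `ℕ`, with `μ p`
playing the role of `μ_{p+1}`.) -/
theorem abs_canonical_product_lower_bound (μ : ℕ → ℝ) (hμpos : ∀ p, 0 < μ p)
    (hμsum : Summable fun p => 1 / (μ p) ^ 2)
    (ζ : ℂ) (hζ : ζ.im ^ 2 ≤ ζ.re ^ 2) (N : ℕ) (hN : 1 ≤ N) :
    ‖ζ‖ ^ (2 * N) / (∏ p ∈ Finset.range N, μ p) ^ 2 ≤
      ‖∏' p : ℕ, (1 + ζ ^ 2 / (μ p : ℂ) ^ 2)‖ := by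
  set f : ℕ → ℂ := fun p => ζ ^ 2 / (μ p : ℂ) ^ 2 with hf
  -- real part of each f p is nonnegative
  have hre : ∀ p, 0 ≤ (f p).re := by
    intro p
    have h1 : f p = ζ ^ 2 / ((μ p ^ 2 : ℝ) : ℂ) := by simp [hf]
    rw [h1, Complex.div_ofReal_re]
    have h2 : (ζ ^ 2).re = ζ.re ^ 2 - ζ.im ^ 2 := by
      rw [sq ζ, Complex.mul_re]; ring
    rw [h2]
    exact div_nonneg (by linarith) (sq_nonneg _)
  -- norm of each f p
  have hnormf : ∀ p, ‖f p‖ = ‖ζ‖ ^ 2 / μ p ^ 2 := by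
    intro p
    simp only [hf, norm_div, norm_pow, Complex.norm_real, Real.norm_eq_abs,
      abs_of_pos (hμpos p)]
  -- pointwise lower bounds on the factors
  have hone : ∀ p, (1 : ℝ) ≤ ‖1 + f p‖ := by
    intro p
    have h := hre p
    have hsq : ‖1 + f p‖ ^ 2 = (1 + (f p).re) ^ 2 + (f p).im ^ 2 := by
      rw [Complex.sq_norm, Complex.normSq_apply]
      simp; ring
    nlinarith [norm_nonneg (1 + f p), sq_nonneg ((f p).im)]
  have hge : ∀ p, ‖f p‖ ≤ ‖1 + f p‖ := by
    intro p
    have h := hre p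
    have hsq : ‖1 + f p‖ ^ 2 = (1 + (f p).re) ^ 2 + (f p).im ^ 2 := by
      rw [Complex.sq_norm, Complex.normSq_apply]
      simp; ring
    have hsq2 : ‖f p‖ ^ 2 = (f p).re ^ 2 + (f p).im ^ 2 := by
      rw [Complex.sq_norm, Complex.normSq_apply]; ring
    nlinarith [norm_nonneg (1 + f p), norm_nonneg (f p)]
  -- summability of f
  have hfs : Summable f := by
    have h1 : Summable fun p => ((1 / (μ p) ^ 2 : ℝ) : ℂ) :=
      Summable.map hμsum (Complex.ofRealHom : ℝ →+* ℂ) Complex.continuous_ofReal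
    have := h1.mul_left (ζ ^ 2)
    refine this.congr fun p => ?_
    simp [hf]
    ring
  -- multipliability of the product
  have hmul : Multipliable fun p => 1 + f p := by
    have hne : ∀ p, 1 + f p ≠ 0 := by
      intro p h
      have : (1 + f p).re = 0 := by rw [h]; simp
      simp only [Complex.add_re, Complex.one_re] at this
      have := hre p
      linarith
    have hlog : Summable fun p => Complex.log (1 + f p) := by
      have htend : Filter.Tendsto f Filter.atTop (nhds 0) := hfs.tendsto_atTop_zero
      have hev : ∀ᶠ p in Filter.atTop, ‖Complex.log (1 + f p)‖ ≤ (3 / 2) * ‖f p‖ := by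
        filter_upwards [htend.eventually (Metric.ball_mem_nhds 0 (by norm_num : (0:ℝ) < 1/2))]
          with p hp
        have : ‖f p‖ ≤ 1 / 2 := by
          simpa [dist_eq_norm] using (le_of_lt (Metric.mem_ball.mp hp))
        exact Complex.norm_log_one_add_half_le_self this
      exact Summable.of_norm_bounded_eventually_nat ((hfs.norm.mul_left (3/2)))
        (by simpa using hev)
    exact Complex.multipliable_of_summable_log hlog
  -- now the chain of inequalities
  have key : ∏' p, ‖1 + f p‖ = ‖∏' p : ℕ, (1 + ζ ^ 2 / (μ p : ℂ) ^ 2)‖ := by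
    rw [← hmul.norm_tprod]
  rw [← key]
  have step1 : ∏ p ∈ Finset.range N, ‖1 + f p‖ ≤ ∏' p, ‖1 + f p‖ := by
    refine ge_of_tendsto hmul.norm.hasProd ?_
    filter_upwards [Filter.eventually_ge_atTop (Finset.range N)] with s hs
    rw [← Finset.prod_sdiff hs]
    have h1 : (1:ℝ) ≤ ∏ p ∈ s \ Finset.range N, ‖1 + f p‖ :=
      le_trans (by simp) (Finset.prod_le_prod (fun _ _ => zero_le_one) (fun i _ => hone i))
    have h0 : 0 ≤ ∏ p ∈ Finset.range N, ‖1 + f p‖ :=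
      Finset.prod_nonneg fun i _ => norm_nonneg _
    exact le_mul_of_one_le_left h0 h1
  refine le_trans ?_ step1
  have step2 : ∏ p ∈ Finset.range N, (‖ζ‖ ^ 2 / μ p ^ 2) ≤
      ∏ p ∈ Finset.range N, ‖1 + f p‖ := by
    apply Finset.prod_le_prod
    · intro p _
      exact div_nonneg (sq_nonneg _) (sq_nonneg _)
    · intro p _
      rw [← hnormf p]
      exact hge p
  refine le_trans (le_of_eq ?_) step2
  rw [Finset.prod_div_distrib, Finset.prod_const, Finset.card_range, ← pow_mul, ← Finset.prod_pow]
end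

section
/- For every complex number ζ with (Re ζ)² ≥ (Im ζ)², one has |P(ζ)| ≥ 1; in particular P(ζ) ≠ 0 on this region. -/
/-- Let `(μ_p)` be a sequence of positive reals with `∑ 1/μ_p² < ∞` and
`P(ζ) = ∏_{p} (1 + ζ²/μ_p²)`. For every `ζ ∈ ℂ` with `(Re ζ)² ≥ (Im ζ)²` one has
`|P(ζ)| ≥ 1`; in particular `P(ζ) ≠ 0` on this region. -/
theorem one_le_abs_canonical_product (μ : ℕ → ℝ) (hμpos : ∀ p, 0 < μ p)
    (hμsum : Summable fun p => 1 / (μ p) ^ 2)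
    (ζ : ℂ) (hζ : ζ.im ^ 2 ≤ ζ.re ^ 2) :
    1 ≤ ‖(∏' p : ℕ, (1 + ζ ^ 2 / (μ p : ℂ) ^ 2))‖ ∧
    (∏' p : ℕ, (1 + ζ ^ 2 / (μ p : ℂ) ^ 2)) ≠ 0 := by
  set f : ℕ → ℂ := fun p => 1 + ζ ^ 2 / (μ p : ℂ) ^ 2 with hf
  -- real part of each term ζ²/μ_p² is nonnegative
  have hre : ∀ p, 0 ≤ (ζ ^ 2 / (μ p : ℂ) ^ 2).re := by
    intro p
    have hμ : (0:ℝ) < (μ p) ^ 2 := pow_pos (hμpos p) 2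
    have : (ζ ^ 2 / (μ p : ℂ) ^ 2) = ζ ^ 2 * ((1 / (μ p)^2 : ℝ) : ℂ) := by
      push_cast; ring
    rw [this, Complex.mul_re]
    simp only [Complex.ofReal_re, Complex.ofReal_im, mul_zero, sub_zero]
    have h1 : 0 ≤ (ζ ^ 2).re := by
      rw [sq, Complex.mul_re]; nlinarith
    positivity
  have hre1 : ∀ p, 1 ≤ (f p).re := by
    intro p
    simp only [hf, Complex.add_re, Complex.one_re]
    linarith [hre p]
  have habs1 : ∀ p, 1 ≤ ‖f p‖ := fun p =>
    le_trans (le_trans (hre1 p) (le_abs_self _)) (Complex.abs_re_le_norm _)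
  have hne : ∀ p, f p ≠ 0 := by
    intro p h
    have := habs1 p
    rw [h] at this; simp at this; linarith
  -- summability of norms of w p := ζ²/μ_p²
  have hwsum : Summable fun p => ‖ζ ^ 2 / (μ p : ℂ) ^ 2‖ := by
    have : (fun p => ‖ζ ^ 2 / (μ p : ℂ) ^ 2‖)
        = fun p => ‖ζ ^ 2‖ * (1 / (μ p) ^ 2) := by
      funext p
      rw [norm_div]
      have : ‖(μ p : ℂ) ^ 2‖ = (μ p) ^ 2 := by
        rw [norm_pow, Complex.norm_real, Real.norm_eq_abs, abs_of_pos (hμpos p)]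
      rw [this]; ring
    rw [this]
    exact hμsum.mul_left _
  -- summability of logs
  have hlogsum : Summable fun p => Complex.log (f p) := by
    apply Summable.of_norm_bounded_eventually
      (g := fun p => (3/2) * ‖ζ ^ 2 / (μ p : ℂ) ^ 2‖) (hwsum.mul_left _)
    have htend : Filter.Tendsto (fun p => ‖ζ ^ 2 / (μ p : ℂ) ^ 2‖)
        Filter.cofinite (nhds 0) := by
      rw [Nat.cofinite_eq_atTop]
      exact hwsum.tendsto_atTop_zero
    filter_upwards [htend.eventually (eventually_le_nhds (by norm_num : (0:ℝ) < 1/2))]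
      with p hp
    exact Complex.norm_log_one_add_half_le_self hp
  have hmult : Multipliable f :=
    Complex.multipliable_of_summable_log hlogsum
  have habs : ‖∏' p, f p‖ = ∏' p, ‖f p‖ :=
    hmult.norm_tprod
  -- log of abs values are summable and nonneg
  have hlogabs : Summable fun p => Real.log ‖f p‖ := by
    have : (fun p => Real.log ‖f p‖) = fun p => (Complex.log (f p)).re := by
      funext p; rw [Complex.log_re]
    rw [this]
    exact (Complex.hasSum_re hlogsum.hasSum).summable
  have hlognn : ∀ p, 0 ≤ Real.log ‖f p‖ := fun p =>
    Real.log_nonneg (habs1 p)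
  have key : 1 ≤ ∏' p, ‖f p‖ := by
    have heq := Real.rexp_tsum_eq_tprod (f := fun p => ‖f p‖)
      (fun p => lt_of_lt_of_le one_pos (habs1 p)) hlogabs
    rw [← heq]
    calc (1:ℝ) = Real.exp 0 := by rw [Real.exp_zero]
    _ ≤ _ := Real.exp_le_exp.mpr (tsum_nonneg hlognn)
  constructor
  · rw [habs]; exact key
  · intro h
    rw [h] at habs
    simp only [norm_zero] at habs
    linarith [habs ▸ key]
end

section
/- Let L > 0 and define P_L(ζ) := ∏_{p=1}^∞ (1 + L²ζ²/m_p²) for ζ ∈ ℂ. Then there exist constants C > 0 and L₁ > 0 such that |P_L(ζ)| ≤ C · exp(M(L₁|ζ|)) for all ζ ∈ ℂ. -/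
/-- The associated function of a sequence `(M_p)`: `M(ρ) := sup_{p ∈ ℕ} log(ρ^p / M_p)`. -/
noncomputable def assocFn (M : ℕ → ℝ) (ρ : ℝ) : ℝ :=
  ⨆ p : ℕ, Real.log (ρ ^ p / M p)

section AuxLemmas
open Real Finset

private lemma assocFn_bdd (M : ℕ → ℝ) (hMpos : ∀ p, 0 < M p)
    (m : ℕ → ℝ) (hm : ∀ p, m p = M (p + 1) / M p)
    (hmtop : Filter.Tendsto m Filter.atTop Filter.atTop)
    {σ : ℝ} (hσ : 0 ≤ σ) :
    BddAbove (Set.range fun p : ℕ => Real.log (σ ^ p / M p)) := by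
  rcases eq_or_lt_of_le hσ with h0 | hσ'
  · refine ⟨max (Real.log (1 / M 0)) 0, ?_⟩
    rintro y ⟨p, rfl⟩
    cases p with
    | zero => simpa using le_max_left _ _
    | succ n => simp [← h0, zero_pow (Nat.succ_ne_zero n)]
  · obtain ⟨n₀, hn₀⟩ := Filter.eventually_atTop.mp (hmtop.eventually_ge_atTop σ)
    have hkey : ∀ j, σ ^ (n₀ + j) / M (n₀ + j) ≤ σ ^ n₀ / M n₀ := by
      intro j
      induction j with
      | zero => simp
      | succ j ih =>
        have hMe : M (n₀ + j + 1) = M (n₀ + j) * m (n₀ + j) := by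
          rw [hm]
          field_simp [(hMpos (n₀ + j)).ne']
        have hmp : 0 < m (n₀ + j) := by
          rw [hm]; exact div_pos (hMpos _) (hMpos _)
        have hstep : σ ^ (n₀ + (j + 1)) / M (n₀ + (j + 1)) =
            (σ ^ (n₀ + j) / M (n₀ + j)) * (σ / m (n₀ + j)) := by
          have : n₀ + (j + 1) = (n₀ + j) + 1 := by ring
          rw [this, hMe, pow_succ]
          field_simp [(hMpos (n₀ + j)).ne']
        rw [hstep]
        have h1 : σ / m (n₀ + j) ≤ 1 := by
          rw [div_le_one hmp]; exact hn₀ _ (Nat.le_add_right _ _)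
        have h2 : 0 ≤ σ ^ (n₀ + j) / M (n₀ + j) :=
          le_of_lt (div_pos (pow_pos hσ' _) (hMpos _))
        calc (σ ^ (n₀ + j) / M (n₀ + j)) * (σ / m (n₀ + j))
            ≤ (σ ^ (n₀ + j) / M (n₀ + j)) * 1 := by
              exact mul_le_mul_of_nonneg_left h1 h2
          _ = σ ^ (n₀ + j) / M (n₀ + j) := mul_one _
          _ ≤ σ ^ n₀ / M n₀ := ih
    refine ⟨(Finset.range (n₀ + 1)).sup' ⟨0, by simp⟩
      (fun p => Real.log (σ ^ p / M p)), ?_⟩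
    rintro y ⟨p, rfl⟩
    rcases le_or_gt p n₀ with hp | hp
    · exact Finset.le_sup' (fun p => Real.log (σ ^ p / M p)) (Finset.mem_range.mpr (Nat.lt_succ_of_le hp))
    · have h1 : σ ^ p / M p ≤ σ ^ n₀ / M n₀ := by
        have := hkey (p - n₀)
        rwa [Nat.add_sub_cancel' (le_of_lt hp)] at this
      have h2 : Real.log (σ ^ p / M p) ≤ Real.log (σ ^ n₀ / M n₀) :=
        Real.log_le_log (div_pos (pow_pos hσ' _) (hMpos _)) h1
      exact h2.trans (Finset.le_sup' (fun p => Real.log (σ ^ p / M p)) (Finset.mem_range.mpr (Nat.lt_succ_self n₀)))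

private lemma le_assocFn (M : ℕ → ℝ) (hMpos : ∀ p, 0 < M p)
    (m : ℕ → ℝ) (hm : ∀ p, m p = M (p + 1) / M p)
    (hmtop : Filter.Tendsto m Filter.atTop Filter.atTop)
    {σ : ℝ} (hσ : 0 ≤ σ) (p : ℕ) :
    Real.log (σ ^ p / M p) ≤ assocFn M σ :=
  le_ciSup (assocFn_bdd M hMpos m hm hmtop hσ) p

private lemma assocFn_nonneg (M : ℕ → ℝ) (hMpos : ∀ p, 0 < M p) (hM0 : M 0 = 1)
    (m : ℕ → ℝ) (hm : ∀ p, m p = M (p + 1) / M p)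
    (hmtop : Filter.Tendsto m Filter.atTop Filter.atTop)
    {σ : ℝ} (hσ : 0 ≤ σ) : 0 ≤ assocFn M σ := by
  have := le_assocFn M hMpos m hm hmtop hσ 0
  simpa [hM0] using this


section
variable (M : ℕ → ℝ) (hMpos : ∀ p, 0 < M p) (hM0 : M 0 = 1)
  (m : ℕ → ℝ) (hm : ∀ p, m p = M (p + 1) / M p)
  (hmtop : Filter.Tendsto m Filter.atTop Filter.atTop)

-- placeholders for aux1 results
variable (le_assoc : ∀ {σ : ℝ}, 0 ≤ σ → ∀ p, Real.log (σ ^ p / M p) ≤ assocFn M σ)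
variable (assoc_nn : ∀ {σ : ℝ}, 0 ≤ σ → 0 ≤ assocFn M σ)

include hM0 in
private lemma assocFn_zero' : assocFn M 0 = 0 := by
  have : (fun p : ℕ => Real.log ((0:ℝ) ^ p / M p)) = fun _ => (0:ℝ) := by
    funext p
    cases p with
    | zero => simp [hM0]
    | succ n => simp [zero_pow (Nat.succ_ne_zero n)]
  rw [assocFn, this, ciSup_const]

include hMpos hM0 le_assoc assoc_nn in
private lemma assocFn_double' {A H : ℝ} (hA : 1 ≤ A) (hH : 1 ≤ H)
    (h2 : ∀ p q : ℕ, q ≤ p → M p ≤ A * H ^ p * M q * M (p - q))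
    {σ : ℝ} (hσ : 0 ≤ σ) :
    2 * assocFn M σ ≤ Real.log A + assocFn M (H * σ) := by
  rcases eq_or_lt_of_le hσ with h0 | hσ'
  · rw [← h0, mul_zero, assocFn_zero' M hM0]
    have := Real.log_nonneg hA
    linarith
  · have key : ∀ p : ℕ, Real.log (σ ^ p / M p) ≤
        (Real.log A + assocFn M (H * σ)) / 2 := by
      intro p
      rw [le_div_iff₀ (by norm_num : (0:ℝ) < 2), mul_comm]
      have hq := h2 (2 * p) p (by omega)
      rw [show 2 * p - p = p by omega] at hq
      have hpos1 : (0:ℝ) < σ ^ p / M p := div_pos (pow_pos hσ' _) (hMpos _)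
      have hHσ : 0 < H * σ := mul_pos (lt_of_lt_of_le one_pos hH) hσ'
      have hx : (σ ^ p / M p) ^ 2 ≤ A * ((H * σ) ^ (2 * p) / M (2 * p)) := by
        rw [div_pow, ← pow_mul, mul_comm p 2, ← mul_div_assoc,
          div_le_div_iff₀ (pow_pos (hMpos p) 2) (hMpos (2 * p))]
        have h1 : σ ^ (2 * p) * M (2 * p) ≤
            σ ^ (2 * p) * (A * H ^ (2 * p) * M p * M p) :=
          mul_le_mul_of_nonneg_left hq (pow_nonneg hσ _)
        calc σ ^ (2 * p) * M (2 * p)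
            ≤ σ ^ (2 * p) * (A * H ^ (2 * p) * M p * M p) := h1
          _ = A * (H * σ) ^ (2 * p) * M p ^ 2 := by rw [mul_pow]; ring
      have h3 : Real.log ((σ ^ p / M p) ^ 2) ≤
          Real.log (A * ((H * σ) ^ (2 * p) / M (2 * p))) :=
        Real.log_le_log (pow_pos hpos1 2) hx
      rw [Real.log_pow] at h3
      push_cast at h3
      rw [Real.log_mul (by linarith) (ne_of_gt (div_pos (pow_pos hHσ _) (hMpos _)))] at h3
      have h4 := le_assoc hHσ.le (2 * p)
      linarith
    have h5 : assocFn M σ ≤ (Real.log A + assocFn M (H * σ)) / 2 := ciSup_le key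
    linarith

include hMpos hM0 le_assoc assoc_nn in
private lemma assocFn_iter' {A H : ℝ} (hA : 1 ≤ A) (hH : 1 ≤ H)
    (h2 : ∀ p q : ℕ, q ≤ p → M p ≤ A * H ^ p * M q * M (p - q))
    (k : ℕ) {σ : ℝ} (hσ : 0 ≤ σ) :
    (2:ℝ) ^ k * assocFn M σ ≤ ((2:ℝ) ^ k - 1) * Real.log A + assocFn M (H ^ k * σ) := by
  induction k with
  | zero => simp
  | succ k ih =>
    have h1 := ih
    have h2' := assocFn_double' M hMpos hM0 (le_assoc := le_assoc) (assoc_nn := assoc_nn)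
      hA hH h2 (σ := H ^ k * σ) (mul_nonneg (pow_nonneg (by linarith) _) hσ)
    have hlogA : 0 ≤ Real.log A := Real.log_nonneg hA
    have heq : H * (H ^ k * σ) = H ^ (k + 1) * σ := by ring
    rw [heq] at h2'
    have hexp : (2:ℝ) ^ (k+1) = 2 * 2 ^ k := by ring
    rw [hexp]
    nlinarith [pow_nonneg (by norm_num : (0:ℝ) ≤ 2) k]
end

section
variable (M : ℕ → ℝ) (hMpos : ∀ p, 0 < M p) (hM0 : M 0 = 1)
  (m : ℕ → ℝ) (hm : ∀ p, m p = M (p + 1) / M p)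
  (hmmono : Monotone m) (hmsum : Summable fun p => 1 / m p)
  (hmtop : Filter.Tendsto m Filter.atTop Filter.atTop)
  (le_assoc : ∀ {σ : ℝ}, 0 ≤ σ → ∀ p, Real.log (σ ^ p / M p) ≤ assocFn M σ)
  (assoc_nn : ∀ {σ : ℝ}, 0 ≤ σ → 0 ≤ assocFn M σ)
  {A' : ℝ} (hA' : 0 < A')
  (h3 : ∀ p : ℕ, 1 ≤ p →
      ∑' j : ℕ, M (p + j) / M (p + j + 1) ≤ A' * p * M p / M (p + 1))

include hMpos hM0 hm hmmono hmsum hmtop le_assoc assoc_nn hA' h3 in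
set_option maxHeartbeats 1000000 in
private lemma key_tsum_le {ρ : ℝ} (hρ : 0 ≤ ρ) :
    ∑' p : ℕ, Real.log (1 + ρ / m p) ≤
      (1 + A' / Real.log 2) * assocFn M (2 * ρ) + m 0 * ∑' p : ℕ, 1 / m p := by
  classical
  have hmpos : ∀ p, 0 < m p := fun p => by
    rw [hm]; exact div_pos (hMpos _) (hMpos _)
  set t : ℕ → ℝ := fun p => Real.log (1 + ρ / m p) with ht_def
  have ht_nonneg : ∀ p, 0 ≤ t p := fun p =>
    Real.log_nonneg (by nlinarith [div_nonneg hρ (hmpos p).le])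
  have ht_le : ∀ p, t p ≤ ρ * (1 / m p) := by
    intro p
    have h1 : 0 < 1 + ρ / m p := by nlinarith [div_nonneg hρ (hmpos p).le]
    have := Real.log_le_sub_one_of_pos h1
    rw [mul_one_div]
    linarith
  have hsum_t : Summable t :=
    Summable.of_nonneg_of_le ht_nonneg ht_le (hmsum.mul_left ρ)
  -- minimal N with m p > ρ for p ≥ N
  have hex : ∃ n, ∀ p, n ≤ p → ρ < m p := by
    obtain ⟨n, hn⟩ := Filter.eventually_atTop.mp (hmtop.eventually_gt_atTop ρ)
    exact ⟨n, fun p hp => hn p hp⟩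
  set N := Nat.find hex with hN_def
  have hNspec : ∀ p, N ≤ p → ρ < m p := Nat.find_spec hex
  have hNlt : ∀ q, q < N → m q ≤ ρ := by
    intro q hq
    by_contra h
    push_neg at h
    exact Nat.find_min hex hq (fun p hp => h.trans_le (hmmono hp))
  have hsplit := Summable.sum_add_tsum_nat_add N hsum_t
  -- M as a product of m's
  have hMprod : ∀ n, M n = ∏ p ∈ range n, m p := by
    intro n
    induction n with
    | zero => simp [hM0]
    | succ n ih =>
      rw [prod_range_succ, ← ih, hm, mul_div_cancel₀ _ (hMpos n).ne']
  -- first part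
  have hfirst : ∑ i ∈ range N, t i ≤ Real.log ((2 * ρ) ^ N / M N) := by
    have h1 : ∀ i ∈ range N, t i ≤ Real.log (2 * ρ / m i) := by
      intro i hi
      have hi' := hNlt i (mem_range.mp hi)
      have hρpos : 0 < ρ := lt_of_lt_of_le (hmpos i) hi'
      apply Real.log_le_log (by nlinarith [div_nonneg hρ (hmpos i).le])
      have h1le : (1:ℝ) ≤ ρ / m i := (one_le_div (hmpos i)).2 hi'
      have h2eq : 2 * ρ / m i = ρ / m i + ρ / m i := by ring
      linarith
    have h2 : ∑ i ∈ range N, t i ≤ ∑ i ∈ range N, Real.log (2 * ρ / m i) :=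
      sum_le_sum h1
    have h3' : ∑ i ∈ range N, Real.log (2 * ρ / m i) =
        Real.log ((2 * ρ) ^ N / M N) := by
      rw [← Real.log_prod]
      · congr 1
        rw [prod_div_distrib, prod_const, card_range, hMprod]
      · intro i hi
        have hi' := hNlt i (mem_range.mp hi)
        have hρpos : 0 < ρ := lt_of_lt_of_le (hmpos i) hi'
        exact (div_pos (by linarith) (hmpos i)).ne'
    linarith
  have hfirst' : Real.log ((2 * ρ) ^ N / M N) ≤ assocFn M (2 * ρ) :=
    le_assoc (by linarith) N
  -- N log 2 ≤ assocFn (2ρ)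
  have hMN_le : M N ≤ ρ ^ N := by
    rw [hMprod]
    calc ∏ p ∈ range N, m p ≤ ∏ p ∈ range N, ρ :=
          prod_le_prod (fun i _ => (hmpos i).le) (fun i hi => hNlt i (mem_range.mp hi))
      _ = ρ ^ N := by rw [prod_const, card_range]
  have hNlog : (N : ℝ) * Real.log 2 ≤ assocFn M (2 * ρ) := by
    have h1 : (2:ℝ) ^ N ≤ (2 * ρ) ^ N / M N := by
      rw [mul_pow, le_div_iff₀ (hMpos N)]
      have := pow_nonneg (by norm_num : (0:ℝ) ≤ 2) N
      nlinarith [pow_nonneg hρ N]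
    have h2 : Real.log ((2:ℝ) ^ N) ≤ Real.log ((2 * ρ) ^ N / M N) :=
      Real.log_le_log (pow_pos (by norm_num) N) h1
    rw [Real.log_pow] at h2
    exact h2.trans hfirst'
  -- second part
  have hshift : Summable fun j => t (j + N) := (summable_nat_add_iff N).mpr hsum_t
  have hshift2 : Summable fun j => 1 / m (j + N) :=
    (summable_nat_add_iff N).mpr hmsum
  have hsecond : ∑' j, t (j + N) ≤ ρ * ∑' j, 1 / m (j + N) := by
    rw [← tsum_mul_left]
    exact Summable.tsum_le_tsum (fun j => ht_le (j + N)) hshift (hshift2.mul_left ρ)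
  have hsecond' : ρ * ∑' j, 1 / m (j + N) ≤
      A' / Real.log 2 * assocFn M (2 * ρ) + m 0 * ∑' p : ℕ, 1 / m p := by
    rcases Nat.eq_zero_or_pos N with hN0 | hN1
    · have hρm0 : ρ < m 0 := hNspec 0 (by omega)
      have h1 : ρ * ∑' j, 1 / m (j + N) ≤ m 0 * ∑' p : ℕ, 1 / m p := by
        rw [hN0]
        simp only [Nat.add_zero]
        exact mul_le_mul hρm0.le le_rfl
          (tsum_nonneg fun p => one_div_nonneg.mpr (hmpos p).le) (hmpos 0).le
      have h2 : 0 ≤ A' / Real.log 2 * assocFn M (2 * ρ) :=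
        mul_nonneg (div_nonneg hA'.le (Real.log_nonneg one_le_two))
          (assoc_nn (by linarith))
      linarith
    · -- N ≥ 1
      have hsum_eq : ∑' j : ℕ, (1:ℝ) / m (j + N) = ∑' j : ℕ, M (N + j) / M (N + j + 1) := by
        apply tsum_congr
        intro j
        rw [hm, one_div, inv_div, Nat.add_comm j N]
      have h4 := h3 N hN1
      have hmN : m N = M (N + 1) / M N := hm N
      have h5 : A' * N * M N / M (N + 1) = A' * N / m N := by
        rw [hmN, div_div_eq_mul_div, mul_div_assoc]
      have h6 : ∑' j : ℕ, (1:ℝ) / m (j + N) ≤ A' * N / m N := by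
        rw [hsum_eq, ← h5]; exact h4
      have h7 : ρ * ∑' j, 1 / m (j + N) ≤ ρ * (A' * N / m N) := by
        apply mul_le_mul_of_nonneg_left h6 hρ
      have h8 : ρ * (A' * N / m N) ≤ A' * N := by
        have hρmN : ρ < m N := hNspec N le_rfl
        rw [mul_div_assoc']
        rw [div_le_iff₀ (hmpos N)]
        have hAN : 0 ≤ A' * (N:ℝ) := by positivity
        nlinarith
      have h9 : A' * (N:ℝ) ≤ A' / Real.log 2 * assocFn M (2 * ρ) := by
        have hlog2 : 0 < Real.log 2 := Real.log_pos one_lt_two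
        rw [div_mul_eq_mul_div, le_div_iff₀ hlog2]
        calc A' * (N:ℝ) * Real.log 2 = A' * ((N:ℝ) * Real.log 2) := by ring
          _ ≤ A' * assocFn M (2 * ρ) := by
            exact mul_le_mul_of_nonneg_left hNlog hA'.le
          _ = A' * assocFn M (2 * ρ) := rfl
      have h10 : 0 ≤ m 0 * ∑' p : ℕ, 1 / m p :=
        mul_nonneg (hmpos 0).le (tsum_nonneg fun p => one_div_nonneg.mpr (hmpos p).le)
      linarith
  have htotal : ∑' p, t p ≤ (1 + A' / Real.log 2) * assocFn M (2 * ρ) +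
      m 0 * ∑' p : ℕ, 1 / m p := by
    rw [← hsplit]
    have hA1 := hfirst.trans hfirst'
    have hA2 := hsecond.trans hsecond'
    linarith
  exact htotal
end

end AuxLemmas

set_option maxHeartbeats 1000000 in
/-- Let `(M_p)_{p≥0}` be a sequence of positive reals with `M_0 = 1` satisfying Komatsu's
conditions (M.1), (M.2), (M.3).  Put `m_p := M_p/M_{p-1}` (here `m p` denotes `m_{p+1}`,
so that `(m_p)` is nondecreasing, `∑ 1/m_p < ∞` and `m_p → ∞`).  Let `L > 0` and
`P_L(ζ) := ∏_{p=1}^∞ (1 + L²ζ²/m_p²)`.  Then there exist `C > 0` and `L₁ > 0` with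
`|P_L(ζ)| ≤ C · exp(M(L₁|ζ|))` for all `ζ ∈ ℂ`. -/
theorem canonical_product_upper_bound_Beurling
    (M : ℕ → ℝ) (hMpos : ∀ p, 0 < M p) (hM0 : M 0 = 1)
    (hM1 : ∀ p : ℕ, (M (p + 1)) ^ 2 ≤ M p * M (p + 2))
    (hM2 : ∃ A H : ℝ, 0 < A ∧ 0 < H ∧
      ∀ p q : ℕ, q ≤ p → M p ≤ A * H ^ p * M q * M (p - q))
    (hM3 : ∃ A' : ℝ, 0 < A' ∧ ∀ p : ℕ, 1 ≤ p →
      ∑' j : ℕ, M (p + j) / M (p + j + 1) ≤ A' * p * M p / M (p + 1))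
    (m : ℕ → ℝ) (hm : ∀ p, m p = M (p + 1) / M p)
    (hmmono : Monotone m) (hmsum : Summable fun p => 1 / m p)
    (hmtop : Filter.Tendsto m Filter.atTop Filter.atTop)
    (L : ℝ) (hL : 0 < L) :
    ∃ C L₁ : ℝ, 0 < C ∧ 0 < L₁ ∧ ∀ ζ : ℂ,
      ‖∏' p : ℕ, (1 + (L : ℂ) ^ 2 * ζ ^ 2 / (m p : ℂ) ^ 2)‖ ≤
        C * Real.exp (assocFn M (L₁ * ‖ζ‖)) := by
  obtain ⟨A, H, hApos, hHpos, h2⟩ := hM2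
  obtain ⟨A', hA', h3⟩ := hM3
  have hmpos : ∀ p, 0 < m p := fun p => by
    rw [hm]; exact div_pos (hMpos _) (hMpos _)
  have le_assoc : ∀ {σ : ℝ}, 0 ≤ σ → ∀ p, Real.log (σ ^ p / M p) ≤ assocFn M σ :=
    fun hσ p => le_assocFn M hMpos m hm hmtop hσ p
  have assoc_nn : ∀ {σ : ℝ}, 0 ≤ σ → 0 ≤ assocFn M σ :=
    fun hσ => assocFn_nonneg M hMpos hM0 m hm hmtop hσ
  set A₁ := max A 1 with hA₁def
  set H₁ := max H 1 with hH₁def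
  have hA₁ : 1 ≤ A₁ := le_max_right _ _
  have hH₁ : 1 ≤ H₁ := le_max_right _ _
  have h2' : ∀ p q : ℕ, q ≤ p → M p ≤ A₁ * H₁ ^ p * M q * M (p - q) := by
    intro p q hqp
    refine (h2 p q hqp).trans ?_
    have hHp : H ^ p ≤ H₁ ^ p := pow_le_pow_left₀ hHpos.le (le_max_left _ _) p
    have step : A * H ^ p ≤ A₁ * H₁ ^ p :=
      mul_le_mul (le_max_left A 1) hHp (pow_nonneg hHpos.le p) (by linarith)
    exact mul_le_mul_of_nonneg_right
      (mul_le_mul_of_nonneg_right step (hMpos q).le) (hMpos (p - q)).le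
  set c : ℝ := 1 + A' / Real.log 2 with hcdef
  set C₀ : ℝ := m 0 * ∑' p : ℕ, 1 / m p with hC₀def
  have hlog2 : 0 < Real.log 2 := Real.log_pos one_lt_two
  have hc : 0 < c := by
    have : 0 < A' / Real.log 2 := div_pos hA' hlog2
    rw [hcdef]; linarith
  have hC₀ : 0 ≤ C₀ :=
    mul_nonneg (hmpos 0).le (tsum_nonneg fun p => one_div_nonneg.mpr (hmpos p).le)
  obtain ⟨k, hk⟩ := pow_unbounded_of_one_lt (2 * c) one_lt_two
  refine ⟨Real.exp (2 * C₀ + ((2:ℝ) ^ k - 1) * Real.log A₁), 2 * L * H₁ ^ k,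
    Real.exp_pos _, by positivity, ?_⟩
  intro ζ
  set ρ := L * ‖ζ‖ with hρdef
  have hρ : 0 ≤ ρ := mul_nonneg hL.le (norm_nonneg ζ)
  set f : ℕ → ℂ := fun p => 1 + (L : ℂ) ^ 2 * ζ ^ 2 / (m p : ℂ) ^ 2 with hfdef
  set x : ℕ → ℝ := fun p => ρ ^ 2 / (m p) ^ 2 with hxdef
  have habs : ∀ p, ‖(L : ℂ) ^ 2 * ζ ^ 2 / (m p : ℂ) ^ 2‖ = x p := by
    intro p
    rw [norm_div, norm_mul, norm_pow, norm_pow, norm_pow, Complex.norm_real,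
      Complex.norm_real, Real.norm_eq_abs, Real.norm_eq_abs, abs_of_pos hL, abs_of_pos (hmpos p), hxdef, hρdef]
    ring
  have hRHSpos : 0 < Real.exp (2 * C₀ + ((2:ℝ) ^ k - 1) * Real.log A₁) *
      Real.exp (assocFn M (2 * L * H₁ ^ k * ‖ζ‖)) :=
    mul_pos (Real.exp_pos _) (Real.exp_pos _)
  by_cases hzero : ∀ p, f p ≠ 0
  swap
  · push_neg at hzero
    obtain ⟨p₀, hp₀⟩ := hzero
    have h : HasProd f 0 := by
      rw [HasProd]
      have hev : ∀ᶠ s : Finset ℕ in Filter.atTop, ∏ b ∈ s, f b = 0 := by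
        filter_upwards [Filter.eventually_ge_atTop ({p₀} : Finset ℕ)] with s hs
        exact Finset.prod_eq_zero (hs (Finset.mem_singleton_self p₀)) hp₀
      exact Filter.Tendsto.congr' (Filter.EventuallyEq.symm hev) tendsto_const_nhds
    have : ∏' p, f p = 0 := h.tprod_eq
    rw [hfdef] at this
    rw [this, norm_zero]
    exact hRHSpos.le
  -- main case
  have hxsum : Summable x := by
    have h1 : Summable (fun p => 1 / (m p) ^ 2) := by
      apply Summable.of_nonneg_of_le
        (fun p => one_div_nonneg.mpr (sq_nonneg _)) _ (hmsum.mul_left (1 / m 0))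
      intro p
      rw [div_mul_div_comm, one_mul]
      apply one_div_le_one_div_of_le (mul_pos (hmpos 0) (hmpos p))
      rw [sq]
      exact mul_le_mul_of_nonneg_right (hmmono (Nat.zero_le p)) (hmpos p).le
    exact Summable.congr (h1.mul_left (ρ ^ 2)) (fun p => by rw [hxdef, mul_one_div])
  have hlog_norm : Summable fun p => ‖Complex.log (f p)‖ := by
    obtain ⟨n₁, hn₁⟩ := Filter.eventually_atTop.mp
      (hmtop.eventually_ge_atTop (max 1 (2 * ρ ^ 2)))
    rw [← summable_nat_add_iff n₁]
    apply Summable.of_nonneg_of_le (fun j => norm_nonneg _) _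
      (((summable_nat_add_iff n₁).mpr hxsum).mul_left (3 / 2))
    intro j
    have hm1 : max 1 (2 * ρ ^ 2) ≤ m (j + n₁) := hn₁ _ (Nat.le_add_left _ _)
    have hmge1 : 1 ≤ m (j + n₁) := le_trans (le_max_left _ _) hm1
    have hmge2 : 2 * ρ ^ 2 ≤ m (j + n₁) := le_trans (le_max_right _ _) hm1
    have hxle : x (j + n₁) ≤ 1 / 2 := by
      rw [hxdef]
      rw [div_le_div_iff₀ (pow_pos (hmpos _) 2) (by norm_num : (0:ℝ) < 2)]
      nlinarith [hmpos (j + n₁)]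
    have hnorm : ‖(L : ℂ) ^ 2 * ζ ^ 2 / (m (j + n₁) : ℂ) ^ 2‖ = x (j + n₁) := by
      exact habs (j + n₁)
    have hb := Complex.norm_log_one_add_half_le_self
      (z := (L : ℂ) ^ 2 * ζ ^ 2 / (m (j + n₁) : ℂ) ^ 2) (by rw [hnorm]; exact hxle)
    rw [hnorm] at hb
    exact hb
  have hlog_sum : Summable fun p => Complex.log (f p) := hlog_norm.of_norm
  have hprod : ∏' p, f p = Complex.exp (∑' p, Complex.log (f p)) := by
    exact (Complex.cexp_tsum_eq_tprod hzero hlog_sum).symm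
  set t : ℕ → ℝ := fun p => Real.log (1 + ρ / m p) with htdef
  have ht_nonneg : ∀ p, 0 ≤ t p := fun p =>
    Real.log_nonneg (by nlinarith [div_nonneg hρ (hmpos p).le])
  have ht_le : ∀ p, t p ≤ ρ * (1 / m p) := by
    intro p
    have h1 : 0 < 1 + ρ / m p := by nlinarith [div_nonneg hρ (hmpos p).le]
    have := Real.log_le_sub_one_of_pos h1
    rw [mul_one_div]
    rw [htdef]
    dsimp only
    linarith
  have hsum_t : Summable t :=
    Summable.of_nonneg_of_le ht_nonneg ht_le (hmsum.mul_left ρ)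
  have hre_sum : Summable fun p => Real.log (‖f p‖) := by
    apply Summable.of_norm_bounded hlog_norm
    intro p
    rw [Real.norm_eq_abs, ← Complex.log_re]
    exact Complex.abs_re_le_norm _
  have hre_le : ∀ p, Real.log (‖f p‖) ≤ 2 * t p := by
    intro p
    have h1 : ‖f p‖ ≤ 1 + x p := by
      rw [hfdef]
      refine le_trans (norm_add_le 1 _) ?_
      rw [norm_one, habs p]
    have hxp : x p = (ρ / m p) ^ 2 := by rw [hxdef, div_pow]
    have h2 : 1 + x p ≤ (1 + ρ / m p) ^ 2 := by
      rw [hxp]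
      nlinarith [div_nonneg hρ (hmpos p).le]
    have h4 : Real.log (‖f p‖) ≤ Real.log ((1 + ρ / m p) ^ 2) :=
      Real.log_le_log (norm_pos_iff.mpr (hzero p)) (h1.trans h2)
    rw [Real.log_pow] at h4
    push_cast at h4
    rw [htdef]
    dsimp only
    linarith
  have h_tsum_le : ∑' p, Real.log (‖f p‖) ≤ 2 * ∑' p, t p := by
    rw [← tsum_mul_left]
    exact Summable.tsum_le_tsum hre_le hre_sum (hsum_t.mul_left 2)
  have hkey : ∑' p, t p ≤ c * assocFn M (2 * ρ) + C₀ :=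
    key_tsum_le M hMpos hM0 m hm hmmono hmsum hmtop
      (le_assoc := le_assoc) (assoc_nn := assoc_nn) hA' h3 hρ
  have hiter : (2:ℝ) ^ k * assocFn M (2 * ρ) ≤
      ((2:ℝ) ^ k - 1) * Real.log A₁ + assocFn M (H₁ ^ k * (2 * ρ)) :=
    assocFn_iter' M hMpos hM0 (le_assoc := le_assoc) (assoc_nn := assoc_nn)
      hA₁ hH₁ h2' k (by linarith)
  have harg : H₁ ^ k * (2 * ρ) = 2 * L * H₁ ^ k * ‖ζ‖ := by
    rw [hρdef]; ring
  rw [harg] at hiter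
  have h2c : 2 * c * assocFn M (2 * ρ) ≤ (2:ℝ) ^ k * assocFn M (2 * ρ) :=
    mul_le_mul_of_nonneg_right hk.le (assoc_nn (by linarith))
  -- put everything together
  have habs_prod : ‖∏' p, f p‖ =
      Real.exp (∑' p, Real.log (‖f p‖)) := by
    rw [hprod, Complex.norm_exp, Complex.re_tsum hlog_sum]
    congr 1
    exact tsum_congr fun p => Complex.log_re (f p)
  have hfinal : ∑' p, Real.log (‖f p‖) ≤
      (2 * C₀ + ((2:ℝ) ^ k - 1) * Real.log A₁) +
        assocFn M (2 * L * H₁ ^ k * ‖ζ‖) := by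
    have hnn := assoc_nn (σ := 2 * ρ) (by linarith)
    nlinarith [h_tsum_le, hkey, h2c, hiter]
  calc ‖∏' p, f p‖
      = Real.exp (∑' p, Real.log (‖f p‖)) := habs_prod
    _ ≤ Real.exp ((2 * C₀ + ((2:ℝ) ^ k - 1) * Real.log A₁) +
        assocFn M (2 * L * H₁ ^ k * ‖ζ‖)) := Real.exp_le_exp.mpr hfinal
    _ = Real.exp (2 * C₀ + ((2:ℝ) ^ k - 1) * Real.log A₁) *
        Real.exp (assocFn M (2 * L * H₁ ^ k * ‖ζ‖)) := Real.exp_add _ _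
end

section
/- Let (L_p)_{p≥1} be a strictly decreasing sequence of positive real numbers with L_p → 0, and define P(ζ) := ∏_{p=1}^∞ (1 + L_p²ζ²/m_p²) for ζ ∈ ℂ. Then for every k > 0 there exists a constant C_k > 0 such that |P(ζ)| ≤ C_k · exp(M(k|ζ|)) for all ζ ∈ ℂ. -/
open Real Filter Finset

namespace CPUBaux

variable {M m : ℕ → ℝ} {ρ σ : ℝ}

lemma mpos (hMpos : ∀ p, 0 < M p) (hm : ∀ p, m p = M (p + 1) / M p) (p : ℕ) : 0 < m p := by
  rw [hm]; exact div_pos (hMpos _) (hMpos _)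

lemma tel (hMpos : ∀ p, 0 < M p) (hM0 : M 0 = 1) (hm : ∀ p, m p = M (p + 1) / M p)
    (hσ : 0 < σ) : ∀ N, Real.log (σ ^ N / M N) = ∑ q ∈ Finset.range N, Real.log (σ / m q) := by
  intro N
  induction N with
  | zero => simp [hM0]
  | succ N ih =>
    have hmN := mpos hMpos hm N
    have hMN := hMpos N
    have hMN1 := hMpos (N + 1)
    have h1 : σ ^ (N + 1) / M (N + 1) = (σ ^ N / M N) * (σ / m N) := by
      rw [hm]
      field_simp
      ring
    rw [h1, Real.log_mul (by positivity) (by positivity), ih, Finset.sum_range_succ]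

lemma bddAux (hMpos : ∀ p, 0 < M p) (hM0 : M 0 = 1) (hm : ∀ p, m p = M (p + 1) / M p)
    (hmmono : Monotone m) (hmtop : Filter.Tendsto m Filter.atTop Filter.atTop)
    (hρ : 0 < ρ) : BddAbove (Set.range fun p => Real.log (ρ ^ p / M p)) := by
  have hex : ∃ N, ρ < m N := (hmtop.eventually_gt_atTop ρ).exists
  set n := Nat.find hex with hn_def
  have hn : ρ < m n := Nat.find_spec hex
  have hlt : ∀ q, q < n → m q ≤ ρ := fun q hq => not_lt.mp (Nat.find_min hex hq)
  have hge : ∀ q, n ≤ q → ρ < m q := fun q hq => hn.trans_le (hmmono hq)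
  refine ⟨Real.log (ρ ^ n / M n), ?_⟩
  rintro x ⟨p, rfl⟩
  show Real.log (ρ ^ p / M p) ≤ Real.log (ρ ^ n / M n)
  rw [tel hMpos hM0 hm hρ, tel hMpos hM0 hm hρ]
  rcases le_or_gt p n with h | h
  · rw [← Finset.sum_range_add_sum_Ico _ h]
    have : 0 ≤ ∑ q ∈ Finset.Ico p n, Real.log (ρ / m q) := by
      refine Finset.sum_nonneg fun q hq => Real.log_nonneg ?_
      have hq2 := (Finset.mem_Ico.mp hq).2
      rw [le_div_iff₀ (mpos hMpos hm q)]
      simpa using hlt q hq2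
    linarith
  · rw [← Finset.sum_range_add_sum_Ico _ h.le]
    have : ∑ q ∈ Finset.Ico n p, Real.log (ρ / m q) ≤ 0 := by
      refine Finset.sum_nonpos fun q hq => ?_
      have hmq := mpos hMpos hm q
      refine Real.log_nonpos (by positivity) ?_
      have hq1 := (Finset.mem_Ico.mp hq).1
      rw [div_le_one (mpos hMpos hm q)]
      exact (hge q hq1).le
    linarith

lemma ge_term (hMpos : ∀ p, 0 < M p) (hM0 : M 0 = 1) (hm : ∀ p, m p = M (p + 1) / M p)
    (hmmono : Monotone m) (hmtop : Filter.Tendsto m Filter.atTop Filter.atTop)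
    (hρ : 0 < ρ) (p : ℕ) : Real.log (ρ ^ p / M p) ≤ assocFn M ρ :=
  le_ciSup (bddAux hMpos hM0 hm hmmono hmtop hρ) p

lemma nonneg (hMpos : ∀ p, 0 < M p) (hM0 : M 0 = 1) (hm : ∀ p, m p = M (p + 1) / M p)
    (hmmono : Monotone m) (hmtop : Filter.Tendsto m Filter.atTop Filter.atTop)
    (hρ : 0 < ρ) : 0 ≤ assocFn M ρ := by
  have := ge_term hMpos hM0 hm hmmono hmtop hρ 0
  simpa [hM0] using this

lemma mono (hMpos : ∀ p, 0 < M p) (hM0 : M 0 = 1) (hm : ∀ p, m p = M (p + 1) / M p)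
    (hmmono : Monotone m) (hmtop : Filter.Tendsto m Filter.atTop Filter.atTop)
    (hρ : 0 < ρ) (hρσ : ρ ≤ σ) : assocFn M ρ ≤ assocFn M σ := by
  have hσ : 0 < σ := hρ.trans_le hρσ
  refine ciSup_le fun p => ?_
  refine le_trans ?_ (ge_term hMpos hM0 hm hmmono hmtop hσ p)
  have hMp := hMpos p
  have h1 : (0:ℝ) < ρ ^ p / M p := by positivity
  rw [Real.log_le_log_iff h1 (by positivity)]
  exact div_le_div_of_nonneg_right (pow_le_pow_left₀ hρ.le hρσ p) (hMpos p).le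

lemma zeroval (hM0 : M 0 = 1) : assocFn M 0 = 0 := by
  have h : (fun p : ℕ => Real.log ((0:ℝ) ^ p / M p)) = fun _ => (0:ℝ) := by
    funext p
    cases p with
    | zero => simp [hM0]
    | succ q => simp [zero_pow (Nat.succ_ne_zero q)]
  rw [assocFn, h, ciSup_const]

lemma double {A H : ℝ} (hMpos : ∀ p, 0 < M p) (hM0 : M 0 = 1) (hm : ∀ p, m p = M (p + 1) / M p)
    (hmmono : Monotone m) (hmtop : Filter.Tendsto m Filter.atTop Filter.atTop)
    (hA : 1 ≤ A) (hH : 1 ≤ H)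
    (h2 : ∀ p q : ℕ, q ≤ p → M p ≤ A * H ^ p * M q * M (p - q))
    (hρ : 0 < ρ) : 2 * assocFn M ρ ≤ Real.log A + assocFn M (H * ρ) := by
  have hH0 : (0:ℝ) < H := lt_of_lt_of_le one_pos hH
  have hHρ : 0 < H * ρ := by positivity
  have key : ∀ p q : ℕ, Real.log (ρ ^ p / M p) + Real.log (ρ ^ q / M q) ≤
      Real.log A + assocFn M (H * ρ) := by
    intro p q
    have hMp := hMpos p; have hMq := hMpos q; have hMpq := hMpos (p + q)
    have e1 : Real.log (ρ ^ p / M p) + Real.log (ρ ^ q / M q) =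
        Real.log (ρ ^ (p + q) / (M p * M q)) := by
      rw [← Real.log_mul (by positivity) (by positivity)]
      congr 1
      rw [pow_add]
      field_simp
    have h3 : M (p + q) ≤ A * H ^ (p + q) * M q * M p := by
      have := h2 (p + q) q (Nat.le_add_left q p)
      simpa [Nat.add_sub_cancel] using this
    have h4 : ρ ^ (p + q) / (M p * M q) ≤ A * ((H * ρ) ^ (p + q) / M (p + q)) := by
      rw [div_le_iff₀ (by positivity), mul_pow]
      have hpow : (0:ℝ) < ρ ^ (p + q) := by positivity
      have h5 : ρ ^ (p + q) * M (p + q) ≤ ρ ^ (p + q) * (A * H ^ (p + q) * M q * M p) :=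
        mul_le_mul_of_nonneg_left h3 hpow.le
      calc ρ ^ (p + q) = ρ ^ (p + q) * M (p + q) / M (p + q) := by field_simp
        _ ≤ ρ ^ (p + q) * (A * H ^ (p + q) * M q * M p) / M (p + q) := by
            exact div_le_div_of_nonneg_right h5 hMpq.le
        _ = A * (H ^ (p + q) * ρ ^ (p + q) / M (p + q)) * (M p * M q) := by
            field_simp
    have h6 : Real.log (ρ ^ (p + q) / (M p * M q)) ≤
        Real.log A + Real.log ((H * ρ) ^ (p + q) / M (p + q)) := by
      rw [← Real.log_mul (by positivity) (by positivity)]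
      have hx : (0:ℝ) < ρ ^ (p + q) / (M p * M q) := by positivity
      rw [Real.log_le_log_iff hx (by positivity)]
      exact h4
    rw [e1]
    exact h6.trans (by linarith [ge_term hMpos hM0 hm hmmono hmtop hHρ (p + q)])
  have h7 : ∀ p : ℕ, Real.log (ρ ^ p / M p) ≤
      Real.log A + assocFn M (H * ρ) - assocFn M ρ := by
    intro p
    have h8 : assocFn M ρ ≤ Real.log A + assocFn M (H * ρ) - Real.log (ρ ^ p / M p) :=
      ciSup_le fun q => by linarith [key p q]
    linarith
  have h9 : assocFn M ρ ≤ Real.log A + assocFn M (H * ρ) - assocFn M ρ := ciSup_le h7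
  linarith

lemma iter {A H : ℝ} (hMpos : ∀ p, 0 < M p) (hM0 : M 0 = 1) (hm : ∀ p, m p = M (p + 1) / M p)
    (hmmono : Monotone m) (hmtop : Filter.Tendsto m Filter.atTop Filter.atTop)
    (hA : 1 ≤ A) (hH : 1 ≤ H)
    (h2 : ∀ p q : ℕ, q ≤ p → M p ≤ A * H ^ p * M q * M (p - q)) :
    ∀ (j : ℕ) (ρ : ℝ), 0 < ρ →
      (2:ℝ) ^ j * assocFn M ρ ≤ (2:ℝ) ^ j * Real.log A + assocFn M (H ^ j * ρ) := by
  intro j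
  induction j with
  | zero =>
    intro ρ hρ
    have := Real.log_nonneg hA
    simpa using by linarith [ (by simp : (1:ℝ) * assocFn M ρ = assocFn M ρ) ]
  | succ j ih =>
    intro ρ hρ
    have hH0 : (0:ℝ) < H := lt_of_lt_of_le one_pos hH
    have h1 : (2:ℝ) ^ (j + 1) * assocFn M ρ = (2:ℝ) ^ j * (2 * assocFn M ρ) := by ring
    have h2' := double hMpos hM0 hm hmmono hmtop hA hH h2 hρ
    have h3 : (2:ℝ) ^ j * (2 * assocFn M ρ) ≤ (2:ℝ) ^ j * (Real.log A + assocFn M (H * ρ)) :=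
      mul_le_mul_of_nonneg_left h2' (by positivity)
    have h4 := ih (H * ρ) (by positivity)
    have h5 : H ^ j * (H * ρ) = H ^ (j + 1) * ρ := by ring
    have hlogA : 0 ≤ Real.log A := Real.log_nonneg hA
    rw [h5] at h4
    have h2j : (0:ℝ) < 2 ^ j := by positivity
    rw [h1]
    have : (2:ℝ) ^ j * (Real.log A + assocFn M (H * ρ)) =
        (2:ℝ) ^ j * Real.log A + (2:ℝ) ^ j * assocFn M (H * ρ) := by ring
    rw [this] at h3
    have : (2:ℝ) ^ (j + 1) * Real.log A = (2:ℝ) ^ j * Real.log A + (2:ℝ) ^ j * Real.log A := by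
      ring
    linarith

set_option maxHeartbeats 1000000 in
lemma key_sum {A' : ℝ} (hMpos : ∀ p, 0 < M p) (hM0 : M 0 = 1) (hm : ∀ p, m p = M (p + 1) / M p)
    (hmmono : Monotone m) (hmsum : Summable fun p => 1 / m p)
    (hmtop : Filter.Tendsto m Filter.atTop Filter.atTop) (hA' : 0 < A')
    (hM3 : ∀ p : ℕ, 1 ≤ p → ∑' j : ℕ, M (p + j) / M (p + j + 1) ≤ A' * p * M p / M (p + 1))
    (hρ : 0 < ρ) :
    ∑' p : ℕ, Real.log (1 + ρ / m p) ≤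
      (1 + A' / Real.log 2) * assocFn M (2 * ρ) + m 0 * ∑' p : ℕ, 1 / m p := by
  have hmp : ∀ p, 0 < m p := mpos hMpos hm
  have h2ρ : (0:ℝ) < 2 * ρ := by positivity
  have hf0 : ∀ p, 0 ≤ Real.log (1 + ρ / m p) := fun p =>
    Real.log_nonneg (by nlinarith [div_nonneg hρ.le (hmp p).le])
  have hfle : ∀ p, Real.log (1 + ρ / m p) ≤ ρ * (1 / m p) := by
    intro p
    have h1 : (0:ℝ) < 1 + ρ / m p := by nlinarith [div_nonneg hρ.le (hmp p).le]
    have := Real.log_le_sub_one_of_pos h1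
    rw [mul_one_div]
    linarith
  have hsum : Summable (fun p => Real.log (1 + ρ / m p)) :=
    Summable.of_nonneg_of_le hf0 hfle (hmsum.mul_left ρ)
  have hS0 : 0 ≤ ∑' p : ℕ, 1 / m p :=
    tsum_nonneg fun p => one_div_nonneg.mpr (hmp p).le
  have hex : ∃ N, ρ < m N := (hmtop.eventually_gt_atTop ρ).exists
  set n := Nat.find hex with hn_def
  have hn : ρ < m n := Nat.find_spec hex
  have hlt : ∀ q, q < n → m q ≤ ρ := fun q hq => not_lt.mp (Nat.find_min hex hq)
  clear hn_def
  clear_value n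
  -- head bound
  have hterm : ∀ q, q < n → Real.log (1 + ρ / m q) ≤ Real.log (2 * ρ / m q) := by
    intro q hq
    have hq' := hlt q hq
    have hmq := hmp q
    have h1 : 1 ≤ ρ / m q := (one_le_div hmq).mpr hq'
    have h2 : (2:ℝ) * ρ / m q = 2 * (ρ / m q) := by ring
    rw [Real.log_le_log_iff (by nlinarith) (by positivity), h2]
    linarith
  have htelsum : ∑ q ∈ Finset.range n, Real.log (2 * ρ / m q) ≤ assocFn M (2 * ρ) := by
    rw [← tel hMpos hM0 hm h2ρ n]
    exact ge_term hMpos hM0 hm hmmono hmtop h2ρ n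
  have hhead : ∑ q ∈ Finset.range n, Real.log (1 + ρ / m q) ≤ assocFn M (2 * ρ) := by
    refine le_trans (Finset.sum_le_sum fun q hq => hterm q (Finset.mem_range.mp hq)) htelsum
  -- n log 2 bound
  have hnlog : (n:ℝ) * Real.log 2 ≤ assocFn M (2 * ρ) := by
    have h1 : ∀ q ∈ Finset.range n, Real.log 2 ≤ Real.log (2 * ρ / m q) := by
      intro q hq
      have hq' := hlt q (Finset.mem_range.mp hq)
      have hmq := hmp q
      have hd : 1 ≤ ρ / m q := (one_le_div hmq).mpr hq'
      have h2 : (2:ℝ) * ρ / m q = 2 * (ρ / m q) := by ring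
      rw [Real.log_le_log_iff two_pos (by positivity), h2]
      linarith
    calc (n:ℝ) * Real.log 2 = ∑ _q ∈ Finset.range n, Real.log 2 := by
          rw [Finset.sum_const, Finset.card_range, nsmul_eq_mul]
      _ ≤ ∑ q ∈ Finset.range n, Real.log (2 * ρ / m q) := Finset.sum_le_sum h1
      _ ≤ assocFn M (2 * ρ) := htelsum
  -- tail bound
  have hsumtail : Summable (fun j => Real.log (1 + ρ / m (j + n))) :=
    (summable_nat_add_iff n).mpr hsum
  have hsummtail : Summable (fun j : ℕ => ρ * (1 / m (j + n))) :=
    (summable_nat_add_iff n).mpr (hmsum.mul_left ρ)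
  have htail : ∑' j : ℕ, Real.log (1 + ρ / m (j + n)) ≤ A' * n + m 0 * ∑' p : ℕ, 1 / m p := by
    have h2 : ∑' j : ℕ, Real.log (1 + ρ / m (j + n)) ≤ ∑' j : ℕ, ρ * (1 / m (j + n)) :=
      Summable.tsum_le_tsum (fun j => hfle (j + n)) hsumtail hsummtail
    have h3 : ∑' j : ℕ, ρ * (1 / m (j + n)) = ρ * ∑' j : ℕ, 1 / m (j + n) := tsum_mul_left
    rcases Nat.eq_zero_or_pos n with h0 | h0
    · have h4 : ρ * ∑' j : ℕ, 1 / m (j + n) ≤ m 0 * ∑' p : ℕ, 1 / m p := by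
        rw [h0]
        simp only [Nat.add_zero]
        exact mul_le_mul_of_nonneg_right (by rw [h0] at hn; exact hn.le) hS0
      have h5 : (0:ℝ) ≤ A' * n := by positivity
      linarith
    · have h4 : ∑' j : ℕ, 1 / m (j + n) = ∑' j : ℕ, M (n + j) / M (n + j + 1) :=
        tsum_congr fun j => by rw [hm, one_div_div, add_comm j n]
      have h5 := hM3 n h0
      have h6 : ρ * ∑' j : ℕ, 1 / m (j + n) ≤ ρ * (A' * n * M n / M (n + 1)) := by
        refine mul_le_mul_of_nonneg_left ?_ hρ.le
        rw [h4]; exact h5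
      have h7 : ρ * (A' * n * M n / M (n + 1)) ≤ A' * n := by
        have hmn : ρ < m n := hn
        rw [hm] at hmn
        have hMn := hMpos n
        have hMn1 := hMpos (n + 1)
        have h8 : ρ * M n ≤ M (n + 1) := by
          rw [lt_div_iff₀ hMn] at hmn
          linarith
        have h9 : ρ * (A' * n * M n / M (n + 1)) = (A' * n) * (ρ * M n / M (n + 1)) := by
          ring
        have h10 : ρ * M n / M (n + 1) ≤ 1 := by
          rw [div_le_one hMn1]; linarith
        have h11 : (0:ℝ) ≤ A' * n := by positivity
        rw [h9]
        nlinarith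
      have h12 : (0:ℝ) ≤ m 0 * ∑' p : ℕ, 1 / m p := mul_nonneg (hmp 0).le hS0
      linarith
  -- combine
  have hsplit := Summable.sum_add_tsum_nat_add n hsum
  have hl2 : (0:ℝ) < Real.log 2 := Real.log_pos one_lt_two
  have hA'n : A' * (n:ℝ) ≤ (A' / Real.log 2) * assocFn M (2 * ρ) := by
    have h1 : A' * (n:ℝ) = (A' / Real.log 2) * ((n:ℝ) * Real.log 2) := by
      field_simp
    rw [h1]
    exact mul_le_mul_of_nonneg_left hnlog (by positivity)
  have hfin := hsplit.symm
  calc ∑' p : ℕ, Real.log (1 + ρ / m p)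
      = (∑ q ∈ Finset.range n, Real.log (1 + ρ / m q)) +
        ∑' j : ℕ, Real.log (1 + ρ / m (j + n)) := hfin
    _ ≤ assocFn M (2 * ρ) + (A' * n + m 0 * ∑' p : ℕ, 1 / m p) := add_le_add hhead htail
    _ ≤ (1 + A' / Real.log 2) * assocFn M (2 * ρ) + m 0 * ∑' p : ℕ, 1 / m p := by
        nlinarith [hA'n]

end CPUBaux

set_option maxHeartbeats 2000000 in
/-- Let `(M_p)_{p≥0}` be a sequence of positive reals with `M_0 = 1` satisfying Komatsu's
conditions (M.1), (M.2), (M.3), and `m_p := M_p/M_{p-1}` (here `m p` denotes `m_{p+1}`).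
Let `(L_p)` be a strictly decreasing sequence of positive reals tending to `0` (here `l p`
denotes `L_{p+1}`), and `P(ζ) := ∏_{p=1}^∞ (1 + L_p²ζ²/m_p²)`.  Then for every `k > 0`
there exists `C_k > 0` with `|P(ζ)| ≤ C_k · exp(M(k|ζ|))` for all `ζ ∈ ℂ`. -/
theorem canonical_product_upper_bound_Roumieu
    (M : ℕ → ℝ) (hMpos : ∀ p, 0 < M p) (hM0 : M 0 = 1)
    (hM1 : ∀ p : ℕ, (M (p + 1)) ^ 2 ≤ M p * M (p + 2))
    (hM2 : ∃ A H : ℝ, 0 < A ∧ 0 < H ∧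
      ∀ p q : ℕ, q ≤ p → M p ≤ A * H ^ p * M q * M (p - q))
    (hM3 : ∃ A' : ℝ, 0 < A' ∧ ∀ p : ℕ, 1 ≤ p →
      ∑' j : ℕ, M (p + j) / M (p + j + 1) ≤ A' * p * M p / M (p + 1))
    (m : ℕ → ℝ) (hm : ∀ p, m p = M (p + 1) / M p)
    (hmmono : Monotone m) (hmsum : Summable fun p => 1 / m p)
    (hmtop : Filter.Tendsto m Filter.atTop Filter.atTop)
    (l : ℕ → ℝ) (hlpos : ∀ p, 0 < l p) (hlanti : StrictAnti l)
    (hl0 : Filter.Tendsto l Filter.atTop (nhds 0)) :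
    ∀ k : ℝ, 0 < k → ∃ Ck : ℝ, 0 < Ck ∧ ∀ ζ : ℂ,
      ‖∏' p : ℕ, (1 + (l p : ℂ) ^ 2 * ζ ^ 2 / (m p : ℂ) ^ 2)‖ ≤
        Ck * Real.exp (assocFn M (k * ‖ζ‖)) := by
  classical
  intro k hk
  have hmp : ∀ p, 0 < m p := CPUBaux.mpos hMpos hm
  obtain ⟨A₀, H₀, hA₀, hH₀, h2₀⟩ := hM2
  obtain ⟨A', hA', h3⟩ := hM3
  set A := max A₀ 1 with hA_def
  set H := max H₀ 1 with hH_def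
  have hA1 : (1:ℝ) ≤ A := le_max_right _ _
  have hH1 : (1:ℝ) ≤ H := le_max_right _ _
  have hH0 : (0:ℝ) < H := lt_of_lt_of_le one_pos hH1
  have hlogA : 0 ≤ Real.log A := Real.log_nonneg hA1
  have h2 : ∀ p q : ℕ, q ≤ p → M p ≤ A * H ^ p * M q * M (p - q) := by
    intro p q hqp
    refine (h2₀ p q hqp).trans ?_
    have h1 : H₀ ^ p ≤ H ^ p := pow_le_pow_left₀ hH₀.le (le_max_left _ _) p
    have hAle : A₀ ≤ A := le_max_left _ _
    have hmul : A₀ * H₀ ^ p ≤ A * H ^ p :=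
      mul_le_mul hAle h1 (by positivity) (by positivity)
    have hMM : (0:ℝ) ≤ M q * M (p - q) := mul_nonneg (hMpos q).le (hMpos (p - q)).le
    calc A₀ * H₀ ^ p * M q * M (p - q) = (A₀ * H₀ ^ p) * (M q * M (p - q)) := by ring
      _ ≤ (A * H ^ p) * (M q * M (p - q)) := mul_le_mul_of_nonneg_right hmul hMM
      _ = A * H ^ p * M q * M (p - q) := by ring
  have hl2 : (0:ℝ) < Real.log 2 := Real.log_pos one_lt_two
  set c2 : ℝ := A' / Real.log 2 with hc2_def
  have hc2 : 0 ≤ c2 := by positivity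
  obtain ⟨j, hj⟩ := pow_unbounded_of_one_lt (4 + 2 * c2) (one_lt_two : (1:ℝ) < 2)
  set ε := k / (2 * H ^ j) with hε_def
  have hε : 0 < ε := by positivity
  obtain ⟨p0, hp0⟩ := Filter.eventually_atTop.mp (hl0.eventually (gt_mem_nhds hε))
  set D := l 0 / m 0 with hD_def
  have hD : 0 < D := div_pos (hlpos 0) (hmp 0)
  set c0 : ℝ := m 0 * ∑' p : ℕ, 1 / m p with hc0_def
  have hS0 : 0 ≤ ∑' p : ℕ, 1 / m p := tsum_nonneg fun p => one_div_nonneg.mpr (hmp p).le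
  have hc0 : 0 ≤ c0 := mul_nonneg (hmp 0).le hS0
  set B : ℝ := 2 * p0 * Real.log (1 + D / ε) + 2 * p0 * Real.log 2 +
      2 * max 0 (Real.log (M p0)) + 2 * c0 + 2 ^ j * Real.log A with hB_def
  have hB : 0 ≤ B := by
    have h1 : 0 ≤ Real.log (1 + D / ε) := Real.log_nonneg (by
      have : 0 ≤ D / ε := by positivity
      linarith)
    have h2' : (0:ℝ) ≤ max 0 (Real.log (M p0)) := le_max_left _ _
    have h3' : (0:ℝ) ≤ (2:ℝ) ^ j * Real.log A := by positivity
    have : (0:ℝ) ≤ (p0:ℝ) := Nat.cast_nonneg p0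
    positivity
  -- main scalar estimate
  have hmain : ∀ r : ℝ, 0 < r →
      2 * (∑' p : ℕ, Real.log (1 + l p * r / m p)) ≤ B + assocFn M (k * r) := by
    intro r hr
    have hεr : 0 < ε * r := by positivity
    have h2εr : 0 < 2 * (ε * r) := by positivity
    have hkr : 0 < k * r := by positivity
    have hxnn : ∀ p, 0 ≤ l p * r / m p := fun p => by
      have := (hlpos p).le; have := (hmp p).le; positivity
    have hf0 : ∀ p, 0 ≤ Real.log (1 + l p * r / m p) := fun p =>
      Real.log_nonneg (by linarith [hxnn p])
    have hfle : ∀ p, Real.log (1 + l p * r / m p) ≤ (l 0 * r) * (1 / m p) := by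
      intro p
      have h1 : (0:ℝ) < 1 + l p * r / m p := by linarith [hxnn p]
      have h2' := Real.log_le_sub_one_of_pos h1
      have h3' : l p * r / m p ≤ l 0 * r * (1 / m p) := by
        rw [mul_one_div, div_le_div_iff_of_pos_right (hmp p)]
        have hle : l p ≤ l 0 := hlanti.antitone (Nat.zero_le p)
        nlinarith [hlpos p, hr]
      linarith
    have hfsum : Summable (fun p => Real.log (1 + l p * r / m p)) :=
      Summable.of_nonneg_of_le hf0 hfle (hmsum.mul_left (l 0 * r))
    have hg0 : ∀ p, 0 ≤ Real.log (1 + ε * r / m p) := fun p =>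
      Real.log_nonneg (by
        have hmq := hmp p
        have : 0 ≤ ε * r / m p := by positivity
        linarith)
    have hgle : ∀ p, Real.log (1 + ε * r / m p) ≤ (ε * r) * (1 / m p) := by
      intro p
      have hmq := hmp p
      have h0 : 0 ≤ ε * r / m p := by positivity
      have h1 : (0:ℝ) < 1 + ε * r / m p := by linarith
      have h2' := Real.log_le_sub_one_of_pos h1
      rw [mul_one_div]
      linarith
    have hgsum : Summable (fun p => Real.log (1 + ε * r / m p)) :=
      Summable.of_nonneg_of_le hg0 hgle (hmsum.mul_left (ε * r))
    -- head
    have hhead : ∑ q ∈ Finset.range p0, Real.log (1 + l q * r / m q) ≤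
        (p0:ℝ) * Real.log (1 + D * r) := by
      have hterm : ∀ q ∈ Finset.range p0, Real.log (1 + l q * r / m q) ≤
          Real.log (1 + D * r) := by
        intro q _
        have h1 : l q * r / m q ≤ D * r := by
          rw [hD_def]
          rw [div_mul_eq_mul_div]
          have hle : l q ≤ l 0 := hlanti.antitone (Nat.zero_le q)
          have h1m : 1 / m q ≤ 1 / m 0 := by
            apply one_div_le_one_div_of_le (hmp 0) (hmmono (Nat.zero_le q))
          calc l q * r / m q = (l q * r) * (1 / m q) := by rw [mul_one_div]
            _ ≤ (l 0 * r) * (1 / m 0) := by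
                refine mul_le_mul (by nlinarith [hlpos q, hr]) h1m
                  (one_div_nonneg.mpr (hmp q).le) (mul_nonneg (hlpos 0).le hr.le)
            _ = l 0 * r / m 0 := by rw [mul_one_div]
        rw [Real.log_le_log_iff (by linarith [hxnn q]) (by nlinarith [hD, hr])]
        linarith
      calc ∑ q ∈ Finset.range p0, Real.log (1 + l q * r / m q)
          ≤ ∑ _q ∈ Finset.range p0, Real.log (1 + D * r) := Finset.sum_le_sum hterm
        _ = (p0:ℝ) * Real.log (1 + D * r) := by
            rw [Finset.sum_const, Finset.card_range, nsmul_eq_mul]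
    have hheadlog : Real.log (1 + D * r) ≤ Real.log (1 + D / ε) + Real.log (1 + ε * r) := by
      have hDr : 0 < 1 + D * r := by nlinarith
      have hc : D / ε * (ε * r) = D * r := by field_simp
      have hle : 1 + D * r ≤ (1 + D / ε) * (1 + ε * r) := by nlinarith [hε.le, hr.le, hD.le]
      calc Real.log (1 + D * r) ≤ Real.log ((1 + D / ε) * (1 + ε * r)) := by
            rw [Real.log_le_log_iff hDr (by nlinarith)]
            exact hle
        _ = Real.log (1 + D / ε) + Real.log (1 + ε * r) := by
            rw [Real.log_mul (by nlinarith) (by nlinarith)]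
    have hpoly : (p0:ℝ) * Real.log (1 + ε * r) ≤
        (p0:ℝ) * Real.log 2 + max 0 (Real.log (M p0)) + assocFn M (ε * r) := by
      have hΛnn := CPUBaux.nonneg hMpos hM0 hm hmmono hmtop hεr
      have hmax : (0:ℝ) ≤ max 0 (Real.log (M p0)) := le_max_left _ _
      by_cases hx : ε * r ≤ 1
      · have h1 : Real.log (1 + ε * r) ≤ Real.log 2 := by
          rw [Real.log_le_log_iff (by linarith) two_pos]
          linarith
        have h2' : (p0:ℝ) * Real.log (1 + ε * r) ≤ (p0:ℝ) * Real.log 2 :=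
          mul_le_mul_of_nonneg_left h1 (Nat.cast_nonneg p0)
        linarith
      · push_neg at hx
        have h1 : Real.log (1 + ε * r) ≤ Real.log 2 + Real.log (ε * r) := by
          rw [← Real.log_mul two_ne_zero (by positivity)]
          rw [Real.log_le_log_iff (by linarith) (by positivity)]
          linarith
        have h2' : (p0:ℝ) * Real.log (ε * r) = Real.log ((ε * r) ^ p0) := by
          rw [Real.log_pow]
        have h3' : Real.log ((ε * r) ^ p0) =
            Real.log ((ε * r) ^ p0 / M p0) + Real.log (M p0) := by
          rw [Real.log_div (by positivity) (hMpos p0).ne']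
          ring
        have h4' : Real.log ((ε * r) ^ p0 / M p0) ≤ assocFn M (ε * r) :=
          CPUBaux.ge_term hMpos hM0 hm hmmono hmtop hεr p0
        have h5' : Real.log (M p0) ≤ max 0 (Real.log (M p0)) := le_max_right _ _
        have h6' : (p0:ℝ) * Real.log (1 + ε * r) ≤
            (p0:ℝ) * (Real.log 2 + Real.log (ε * r)) :=
          mul_le_mul_of_nonneg_left h1 (Nat.cast_nonneg p0)
        have h7' : (p0:ℝ) * (Real.log 2 + Real.log (ε * r)) =
            (p0:ℝ) * Real.log 2 + (p0:ℝ) * Real.log (ε * r) := by ring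
        linarith
    -- tail
    have htail : ∑' i : ℕ, Real.log (1 + l (i + p0) * r / m (i + p0)) ≤
        ∑' p : ℕ, Real.log (1 + ε * r / m p) := by
      have hsum1 : Summable (fun i => Real.log (1 + l (i + p0) * r / m (i + p0))) :=
        (summable_nat_add_iff p0).mpr hfsum
      have hsum2 : Summable (fun i => Real.log (1 + ε * r / m (i + p0))) :=
        (summable_nat_add_iff p0).mpr hgsum
      have h1 : ∑' i : ℕ, Real.log (1 + l (i + p0) * r / m (i + p0)) ≤
          ∑' i : ℕ, Real.log (1 + ε * r / m (i + p0)) := by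
        refine Summable.tsum_le_tsum (fun i => ?_) hsum1 hsum2
        have hlε : l (i + p0) ≤ ε := (hp0 (i + p0) (Nat.le_add_left p0 i)).le
        have hmq := hmp (i + p0)
        rw [Real.log_le_log_iff (by linarith [hxnn (i + p0)]) (by
          have : 0 ≤ ε * r / m (i + p0) := by positivity
          linarith)]
        have : l (i + p0) * r / m (i + p0) ≤ ε * r / m (i + p0) := by
          rw [div_le_div_iff_of_pos_right hmq]
          nlinarith [hlpos (i + p0), hr]
        linarith
      have h2' : ∑' i : ℕ, Real.log (1 + ε * r / m (i + p0)) ≤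
          ∑' p : ℕ, Real.log (1 + ε * r / m p) := by
        have hsplit := Summable.sum_add_tsum_nat_add p0 hgsum
        have hhd : 0 ≤ ∑ q ∈ Finset.range p0, Real.log (1 + ε * r / m q) :=
          Finset.sum_nonneg fun q _ => hg0 q
        linarith
      linarith
    have hks := CPUBaux.key_sum hMpos hM0 hm hmmono hmsum hmtop hA' h3 hεr
    -- split the full sum
    have hsplitf := Summable.sum_add_tsum_nat_add p0 hfsum
    have hS : ∑' p : ℕ, Real.log (1 + l p * r / m p) ≤
        (p0:ℝ) * Real.log (1 + D / ε) + (p0:ℝ) * Real.log 2 + max 0 (Real.log (M p0)) +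
          assocFn M (ε * r) + ((1 + c2) * assocFn M (2 * (ε * r)) + c0) := by
      have h5' : (p0:ℝ) * Real.log (1 + D * r) ≤ (p0:ℝ) * Real.log (1 + D / ε) +
          (p0:ℝ) * Real.log (1 + ε * r) := by
        have := mul_le_mul_of_nonneg_left hheadlog (Nat.cast_nonneg p0 : (0:ℝ) ≤ p0)
        linarith [this]
      have hks' : ∑' p : ℕ, Real.log (1 + ε * r / m p) ≤
          (1 + c2) * assocFn M (2 * (ε * r)) + c0 := hks
      linarith [hhead, hpoly, htail, hsplitf.symm.le, hsplitf.le]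
    -- now the doubling
    have hmono1 : assocFn M (ε * r) ≤ assocFn M (2 * (ε * r)) :=
      CPUBaux.mono hMpos hM0 hm hmmono hmtop hεr (by linarith)
    have hΛnn2 := CPUBaux.nonneg hMpos hM0 hm hmmono hmtop h2εr
    have hiter := CPUBaux.iter hMpos hM0 hm hmmono hmtop hA1 hH1 h2 j (2 * (ε * r)) h2εr
    have harg : H ^ j * (2 * (ε * r)) = k * r := by
      rw [hε_def]
      field_simp
    rw [harg] at hiter
    have hcoef : (4 + 2 * c2) * assocFn M (2 * (ε * r)) ≤
        (2:ℝ) ^ j * assocFn M (2 * (ε * r)) :=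
      mul_le_mul_of_nonneg_right hj.le hΛnn2
    rw [hB_def]
    nlinarith [hS, hmono1, hΛnn2, hiter, hcoef]
  -- conclude
  refine ⟨Real.exp B, Real.exp_pos B, fun ζ => ?_⟩
  have hCk1 : (1:ℝ) ≤ Real.exp B := Real.one_le_exp hB
  by_cases hζ : ζ = 0
  · subst hζ
    have h1 : (fun p : ℕ => 1 + (l p : ℂ) ^ 2 * (0:ℂ) ^ 2 / (m p : ℂ) ^ 2) =
        fun _ : ℕ => (1:ℂ) := by
      funext p
      simp
    rw [h1, tprod_one]
    simp only [norm_one, norm_zero, mul_zero, CPUBaux.zeroval hM0, Real.exp_zero, mul_one]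
    exact hCk1
  · have hr : 0 < ‖ζ‖ := norm_pos_iff.mpr hζ
    set r := ‖ζ‖ with hr_def
    set z : ℕ → ℂ := fun p => (l p : ℂ) ^ 2 * ζ ^ 2 / (m p : ℂ) ^ 2 with hz_def
    set g : ℕ → ℝ := fun p => 2 * Real.log (1 + l p * r / m p) with hg_def
    have hxnn : ∀ p, 0 ≤ l p * r / m p := fun p => by
      have := (hlpos p).le; have := (hmp p).le; positivity
    have hg0 : ∀ p, 0 ≤ g p := fun p => by
      have := Real.log_nonneg (by linarith [hxnn p] : 1 ≤ 1 + l p * r / m p)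
      rw [hg_def]; dsimp only; linarith
    have hf0 : ∀ p, 0 ≤ Real.log (1 + l p * r / m p) := fun p =>
      Real.log_nonneg (by linarith [hxnn p])
    have hfle : ∀ p, Real.log (1 + l p * r / m p) ≤ (l 0 * r) * (1 / m p) := by
      intro p
      have h1 : (0:ℝ) < 1 + l p * r / m p := by linarith [hxnn p]
      have h2' := Real.log_le_sub_one_of_pos h1
      have h3' : l p * r / m p ≤ l 0 * r * (1 / m p) := by
        rw [mul_one_div, div_le_div_iff_of_pos_right (hmp p)]
        have hle : l p ≤ l 0 := hlanti.antitone (Nat.zero_le p)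
        nlinarith [hlpos p, hr]
      linarith
    have hfsum : Summable (fun p => Real.log (1 + l p * r / m p)) :=
      Summable.of_nonneg_of_le hf0 hfle (hmsum.mul_left (l 0 * r))
    have hgsum : Summable g := by
      rw [hg_def]
      exact hfsum.mul_left 2
    have hgt : ∑' p, g p = 2 * ∑' p, Real.log (1 + l p * r / m p) := by
      rw [hg_def]
      exact tsum_mul_left
    have hterm : ∀ p, ‖1 + z p‖ ≤ Real.exp (g p) := by
      intro p
      have hmq := hmp p
      have hlq := hlpos p
      have habs : ‖z p‖ = (l p) ^ 2 * r ^ 2 / (m p) ^ 2 := by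
        rw [hz_def]
        dsimp only
        rw [norm_div, norm_mul, norm_pow, norm_pow, norm_pow, Complex.norm_real,
          Complex.norm_real, Real.norm_eq_abs, Real.norm_eq_abs, abs_of_pos hlq, abs_of_pos hmq]
      have h1 : ‖1 + z p‖ ≤ 1 + (l p) ^ 2 * r ^ 2 / (m p) ^ 2 := by
        calc ‖1 + z p‖ ≤ ‖(1:ℂ)‖ + ‖z p‖ :=
              norm_add_le _ _
          _ = 1 + (l p) ^ 2 * r ^ 2 / (m p) ^ 2 := by rw [norm_one, habs]
      have hsq : (l p * r / m p) ^ 2 = (l p) ^ 2 * r ^ 2 / (m p) ^ 2 := by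
        rw [div_pow, mul_pow]
      have h2' : 1 + (l p) ^ 2 * r ^ 2 / (m p) ^ 2 ≤ (1 + l p * r / m p) ^ 2 := by
        nlinarith [hxnn p, hsq]
      have h3' : Real.exp (g p) = (1 + l p * r / m p) ^ 2 := by
        rw [hg_def]
        dsimp only
        rw [two_mul, Real.exp_add, Real.exp_log (by linarith [hxnn p]), sq]
      rw [h3']
      linarith
    have hbound : 2 * (∑' p : ℕ, Real.log (1 + l p * r / m p)) ≤ B + assocFn M (k * r) :=
      hmain r hr
    by_cases hmul : Multipliable (fun p : ℕ => 1 + z p)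
    · have habs_eq : ‖∏' p : ℕ, (1 + z p)‖ = ∏' p : ℕ, ‖1 + z p‖ :=
        hmul.norm_tprod
      have hmabs : Multipliable (fun p : ℕ => ‖1 + z p‖) :=
        hmul.norm
      have hprodle : ∏' p : ℕ, ‖1 + z p‖ ≤ Real.exp (∑' p, g p) := by
        refine le_of_tendsto hmabs.hasProd (Filter.Eventually.of_forall fun F => ?_)
        calc ∏ p ∈ F, ‖1 + z p‖ ≤ ∏ p ∈ F, Real.exp (g p) :=
              Finset.prod_le_prod (fun p _ => norm_nonneg _) (fun p _ => hterm p)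
          _ = Real.exp (∑ p ∈ F, g p) := (Real.exp_sum F g).symm
          _ ≤ Real.exp (∑' p, g p) :=
              Real.exp_le_exp.mpr (Summable.sum_le_tsum F (fun p _ => hg0 p) hgsum)
      have hfinal : Real.exp (∑' p, g p) ≤ Real.exp B * Real.exp (assocFn M (k * r)) := by
        rw [← Real.exp_add]
        apply Real.exp_le_exp.mpr
        rw [hgt]
        linarith [hbound]
      show ‖∏' p : ℕ, (1 + z p)‖ ≤ Real.exp B * Real.exp (assocFn M (k * r))
      rw [habs_eq]
      exact hprodle.trans hfinal
    · show ‖∏' p : ℕ, (1 + z p)‖ ≤ Real.exp B * Real.exp (assocFn M (k * r))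
      rw [tprod_eq_one_of_not_multipliable hmul, norm_one]
      have hΛ := CPUBaux.nonneg hMpos hM0 hm hmmono hmtop (by positivity : 0 < k * r)
      have h1 : (1:ℝ) ≤ Real.exp (assocFn M (k * r)) := Real.one_le_exp hΛ
      nlinarith [Real.exp_pos B, Real.exp_pos (assocFn M (k * r))]
end

section
/- Let L > 0 and define the entire function P_L(ζ) := ∏_{p=1}^∞ (1 + L²ζ²/m_p²), and let a_p := (iteratedDeriv p P_L 0)/p! be its p-th Taylor coefficient at 0. Then there exist constants C > 0 and L₂ > 0 such that |a_p| ≤ C · L₂^p / M_p for all p ∈ ℕ. -/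
set_option maxHeartbeats 1000000

open Metric Complex Finset intervalIntegral

lemma cauchy_bound {f : ℂ → ℂ} {r B : ℝ} (hr : 0 < r)
    (hd : DifferentiableOn ℂ f (closedBall 0 r))
    (hB : ∀ z ∈ sphere (0:ℂ) r, ‖f z‖ ≤ B) (p : ℕ) :
    ‖iteratedDeriv p f 0‖ ≤ p.factorial * B / r ^ p := by
  lift r to NNReal using hr.le with R hR'
  have hR : 0 < R := by exact_mod_cast hr
  have h1 : HasFPowerSeriesOnBall f (cauchyPowerSeries f 0 R) 0 R :=
    hd.hasFPowerSeriesOnBall hR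
  have h2 : iteratedDeriv p f 0 = p.factorial • (cauchyPowerSeries f 0 R p (fun _ => 1)) := by
    rw [iteratedDeriv_eq_iteratedFDeriv, ← h1.factorial_smul]
  have hmem : ((R:ℝ):ℂ) ∈ sphere (0:ℂ) (R:ℝ) := by
    simp [Complex.dist_eq, Complex.norm_of_nonneg hr.le]
  have hBnonneg : 0 ≤ B := le_trans (norm_nonneg _) (hB _ hmem)
  -- continuity of f on the circle
  have hcont : Continuous fun θ : ℝ => ‖f (circleMap 0 R θ)‖ := by
    refine (hd.continuousOn.comp_continuous (continuous_circleMap 0 R) fun θ => ?_).norm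
    exact sphere_subset_closedBall (circleMap_mem_sphere 0 hr.le θ)
  have hint : (∫ θ : ℝ in (0:ℝ)..2 * Real.pi, ‖f (circleMap 0 R θ)‖) ≤ 2 * Real.pi * B := by
    have h := intervalIntegral.integral_mono_on (a := (0:ℝ)) (b := 2 * Real.pi)
      (by positivity) (hcont.intervalIntegrable _ _)
      ((intervalIntegrable_const : IntervalIntegrable (fun _ => B) MeasureTheory.volume 0 (2*Real.pi)))
      (fun θ _ => hB _ (circleMap_mem_sphere 0 hr.le θ))
    simpa [mul_comm] using h
  have h3 : ‖cauchyPowerSeries f 0 R p‖ ≤ B * (R:ℝ)⁻¹ ^ p := by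
    refine (norm_cauchyPowerSeries_le f 0 R p).trans ?_
    have habs : |(R:ℝ)| = (R:ℝ) := abs_of_nonneg hr.le
    rw [habs]
    gcongr
    calc (2 * Real.pi)⁻¹ * ∫ θ : ℝ in (0:ℝ)..2 * Real.pi, ‖f (circleMap 0 R θ)‖
        ≤ (2 * Real.pi)⁻¹ * (2 * Real.pi * B) := by gcongr
      _ = B := by field_simp
  have h4 : ‖cauchyPowerSeries f 0 R p (fun _ => 1)‖ ≤ B * (R:ℝ)⁻¹ ^ p := by
    refine le_trans ?_ h3
    have := (cauchyPowerSeries f 0 R p).le_opNorm (fun _ => (1:ℂ))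
    simpa using this
  calc ‖iteratedDeriv p f 0‖
      = p.factorial * ‖cauchyPowerSeries f 0 R p (fun _ => 1)‖ := by
        rw [h2]; simp [nsmul_eq_mul]
    _ ≤ p.factorial * (B * (R:ℝ)⁻¹ ^ p) := by gcongr
    _ = p.factorial * B / (R:ℝ) ^ p := by
        rw [inv_pow]; ring

lemma prod_rep (m : ℕ → ℝ) (hmpos : ∀ j, 0 < m j) (L R : ℝ) (hL : 0 < L) (hR : 0 < R)
    (N : ℕ) (hN : ∀ j, N ≤ j → 2 * (L * R) ≤ m j)
    (hsum : Summable fun j => 1 / m j) :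
    DifferentiableOn ℂ (fun ζ : ℂ => (∏ i ∈ Finset.range N, (1 + (L:ℂ)^2 * ζ^2 / (m i : ℂ)^2)) *
        Complex.exp (∑' j : ℕ, Complex.log (1 + (L:ℂ)^2 * ζ^2 / (m (N + j) : ℂ)^2)))
      (Metric.ball 0 R) ∧
    ∀ ζ ∈ Metric.ball (0:ℂ) R,
      HasProd (fun j : ℕ => 1 + (L:ℂ)^2 * ζ^2 / (m j : ℂ)^2)
        ((∏ i ∈ Finset.range N, (1 + (L:ℂ)^2 * ζ^2 / (m i : ℂ)^2)) *
          Complex.exp (∑' j : ℕ, Complex.log (1 + (L:ℂ)^2 * ζ^2 / (m (N + j) : ℂ)^2))) := by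
  set w : ℕ → ℂ → ℂ := fun j ζ => (L:ℂ)^2 * ζ^2 / (m j : ℂ)^2 with hw
  have hLR : 0 < L * R := mul_pos hL hR
  have hnorm : ∀ (j : ℕ) (ζ : ℂ), ‖ζ‖ ≤ R → ‖w j ζ‖ ≤ (L*R)^2 / (m j)^2 := by
    intro j ζ hζ
    have hmj := hmpos j
    rw [hw]
    simp only [norm_div, norm_mul, norm_pow, Complex.norm_real, Real.norm_eq_abs,
      abs_of_pos hL, abs_of_pos hmj]
    rw [mul_pow]
    gcongr
  have hquarter : ∀ j : ℕ, N ≤ j → (L*R)^2 / (m j)^2 ≤ 1/4 := by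
    intro j hj
    have h1 := hN j hj
    have : (L*R)^2 / (m j)^2 ≤ (L*R)^2 / (2*(L*R))^2 := by
      gcongr
    refine this.trans ?_
    rw [mul_pow]
    rw [div_le_div_iff₀ (by positivity) (by norm_num)]
    ring_nf
    nlinarith [sq_nonneg (L*R)]
  have hsumN : Summable (fun j : ℕ => 1 / m (N + j)) := by
    have := (summable_nat_add_iff N).mpr hsum
    simpa [add_comm] using this
  have husum : Summable (fun j : ℕ => (3/2) * ((L*R)^2 / (m (N + j))^2)) := by
    refine Summable.mul_left _ ?_
    refine Summable.of_nonneg_of_le (fun j => by positivity)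
      (fun j => ?_) (hsumN.mul_left ((L*R)^2 / (2*(L*R))))
    have h1 := hN (N + j) (Nat.le_add_right _ _)
    have hmj := hmpos (N + j)
    have : (L*R)^2 / (m (N+j))^2 = ((L*R)^2 / m (N+j)) * (1 / m (N+j)) := by
      field_simp
    rw [this]
    gcongr
  -- bound on log terms
  have hlog : ∀ (ζ : ℂ), ‖ζ‖ ≤ R → ∀ j : ℕ,
      ‖Complex.log (1 + w (N + j) ζ)‖ ≤ (3/2) * ((L*R)^2 / (m (N + j))^2) := by
    intro ζ hζ j
    have h1 := hnorm (N + j) ζ hζ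
    have h2 := hquarter (N + j) (Nat.le_add_right _ _)
    have h3 : ‖w (N+j) ζ‖ ≤ 1/2 := h1.trans (h2.trans (by norm_num))
    calc ‖Complex.log (1 + w (N+j) ζ)‖ ≤ (3/2) * ‖w (N+j) ζ‖ :=
          Complex.norm_log_one_add_half_le_self h3
      _ ≤ (3/2) * ((L*R)^2 / (m (N+j))^2) := by gcongr
  have hne : ∀ (ζ : ℂ), ‖ζ‖ ≤ R → ∀ j : ℕ, N ≤ j → 1 + w j ζ ≠ 0 := by
    intro ζ hζ j hj h0
    have hv : w j ζ = -1 := by linear_combination h0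
    have h2 := (hnorm j ζ hζ).trans (hquarter j hj)
    rw [hv] at h2
    simp at h2
    norm_num at h2
  have hdiff1 : ∀ i : ℕ, Differentiable ℂ (fun ζ : ℂ => 1 + (L:ℂ)^2 * ζ^2 / (m i : ℂ)^2) := by
    intro i
    apply Differentiable.add (differentiable_const _)
    exact ((differentiable_const ((L:ℂ)^2)).mul (differentiable_pow 2)).div_const _
  have hterm : ∀ j : ℕ, DifferentiableOn ℂ
      (fun ζ : ℂ => Complex.log (1 + w (N + j) ζ)) (Metric.ball 0 R) := by
    intro j
    refine DifferentiableOn.clog (hdiff1 (N+j)).differentiableOn ?_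
    intro ζ hζ
    have hb := (hnorm (N+j) ζ (le_of_lt (mem_ball_zero_iff.mp hζ))).trans
      (hquarter (N+j) (Nat.le_add_right _ _))
    refine Complex.mem_slitPlane_iff.mpr (Or.inl ?_)
    have hre : |(w (N+j) ζ).re| ≤ ‖w (N+j) ζ‖ := Complex.abs_re_le_norm _
    have : (1 + w (N+j) ζ).re = 1 + (w (N+j) ζ).re := by simp
    rw [this]
    have := abs_le.mp (hre.trans hb)
    linarith [this.1]
  have hdiffsum : DifferentiableOn ℂ
      (fun ζ : ℂ => ∑' j : ℕ, Complex.log (1 + w (N+j) ζ)) (Metric.ball 0 R) :=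
    differentiableOn_tsum_of_summable_norm husum hterm isOpen_ball
      (fun j ζ hζ => hlog ζ (le_of_lt (mem_ball_zero_iff.mp hζ)) j)
  have hhasprod : ∀ ζ ∈ Metric.ball (0:ℂ) R,
      HasProd (fun j : ℕ => 1 + w j ζ)
        ((∏ i ∈ Finset.range N, (1 + w i ζ)) *
          Complex.exp (∑' j : ℕ, Complex.log (1 + w (N + j) ζ))) := by
    intro ζ hζ
    have hζR := le_of_lt (mem_ball_zero_iff.mp hζ)
    have hsummable : Summable (fun j : ℕ => Complex.log (1 + w (N+j) ζ)) :=
      Summable.of_norm_bounded husum (hlog ζ hζR)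
    have htail : HasProd (fun j : ℕ => 1 + w (N+j) ζ)
        (Complex.exp (∑' j : ℕ, Complex.log (1 + w (N+j) ζ))) := by
      have h := hsummable.hasSum.cexp
      have heq : (Complex.exp ∘ fun j : ℕ => Complex.log (1 + w (N+j) ζ))
          = fun j : ℕ => 1 + w (N+j) ζ :=
        funext fun j => Complex.exp_log (hne ζ hζR (N+j) (Nat.le_add_right _ _))
      rwa [heq] at h
    have htail' : HasProd (fun n : ℕ => 1 + w (n + N) ζ)
        (Complex.exp (∑' j : ℕ, Complex.log (1 + w (N+j) ζ))) := by
      have : (fun n : ℕ => 1 + w (n + N) ζ) = fun j : ℕ => 1 + w (N + j) ζ := by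
        funext n; rw [Nat.add_comm n N]
      rw [this]
      exact htail
    exact HasProd.prod_range_mul (f := fun j : ℕ => 1 + w j ζ) (k := N) htail'
  have hdprod : Differentiable ℂ (fun ζ : ℂ => ∏ i ∈ Finset.range N, (1 + w i ζ)) :=
    Differentiable.fun_finsetProd (fun i _ => hdiff1 i)
  have hdexp : DifferentiableOn ℂ
      (fun ζ : ℂ => Complex.exp (∑' j : ℕ, Complex.log (1 + w (N+j) ζ))) (Metric.ball 0 R) :=
    hdiffsum.cexp
  exact ⟨hdprod.differentiableOn.mul hdexp, hhasprod⟩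

/-- Let `(M_p)_{p≥0}` be a sequence of positive reals with `M_0 = 1` satisfying Komatsu's
conditions (M.1), (M.2), (M.3), and `m_p := M_p/M_{p-1}` (here `m p` denotes `m_{p+1}`).
Let `L > 0`, let `P_L(ζ) := ∏_{p=1}^∞ (1 + L²ζ²/m_p²)` (an entire function), and let
`a_p := (iteratedDeriv p P_L 0)/p!` be its Taylor coefficients at `0`.  Then there exist
`C > 0` and `L₂ > 0` with `|a_p| ≤ C · L₂^p / M_p` for all `p ∈ ℕ`. -/
theorem taylor_coeff_bound_Beurling
    (M : ℕ → ℝ) (hMpos : ∀ p, 0 < M p) (hM0 : M 0 = 1)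
    (hM1 : ∀ p : ℕ, (M (p + 1)) ^ 2 ≤ M p * M (p + 2))
    (hM2 : ∃ A H : ℝ, 0 < A ∧ 0 < H ∧
      ∀ p q : ℕ, q ≤ p → M p ≤ A * H ^ p * M q * M (p - q))
    (hM3 : ∃ A' : ℝ, 0 < A' ∧ ∀ p : ℕ, 1 ≤ p →
      ∑' j : ℕ, M (p + j) / M (p + j + 1) ≤ A' * p * M p / M (p + 1))
    (m : ℕ → ℝ) (hm : ∀ p, m p = M (p + 1) / M p)
    (hmmono : Monotone m) (hmsum : Summable fun p => 1 / m p)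
    (hmtop : Filter.Tendsto m Filter.atTop Filter.atTop)
    (L : ℝ) (hL : 0 < L)
    (PL : ℂ → ℂ) (hPL : ∀ ζ, PL ζ = ∏' p : ℕ, (1 + (L : ℂ) ^ 2 * ζ ^ 2 / (m p : ℂ) ^ 2))
    (a : ℕ → ℂ) (ha : ∀ p, a p = iteratedDeriv p PL 0 / (p.factorial : ℂ)) :
    ∃ C L₂ : ℝ, 0 < C ∧ 0 < L₂ ∧ ∀ p : ℕ,
      ‖a p‖ ≤ C * L₂ ^ p / M p := by
  obtain ⟨A, H, hA, hH, hAH⟩ := hM2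
  obtain ⟨A', hA', hA3⟩ := hM3
  have hmpos : ∀ j, 0 < m j := fun j => by
    rw [hm]; exact div_pos (hMpos _) (hMpos _)
  have hMprod : ∀ p, M p = ∏ i ∈ Finset.range p, m i := by
    intro p
    induction p with
    | zero => simp [hM0]
    | succ n ih =>
      rw [Finset.prod_range_succ, ← ih, hm]
      field_simp [(hMpos n).ne']
  have hSsum : ∀ k : ℕ, Summable (fun j : ℕ => 1 / m (k + j)) := fun k => by
    simpa [add_comm] using (summable_nat_add_iff k).mpr hmsum
  have hS : ∀ p : ℕ, 1 ≤ p → ∑' j : ℕ, 1 / m (p + j) ≤ A' * p / m p := by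
    intro p hp
    calc ∑' j : ℕ, 1 / m (p + j) = ∑' j : ℕ, M (p + j) / M (p + j + 1) := by
          refine tsum_congr fun j => ?_
          rw [hm]
          rw [one_div, inv_div]
      _ ≤ A' * p * M p / M (p + 1) := hA3 p hp
      _ = A' * p / m p := by
          rw [hm, div_div_eq_mul_div]
  -- the key estimate for p ≥ 1
  have hmain : ∀ p : ℕ, 1 ≤ p →
      ‖a p‖ ≤ A * (2 * L * H ^ 2 * Real.exp ((5/2) * A')) ^ p / M p := by
    intro p hp
    set t := m p with ht'
    have ht : 0 < t := hmpos p
    set r := t / L with hr'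
    have hr : 0 < r := by positivity
    have hLr : L * r = t := by
      rw [hr']; field_simp
    set R := r + 1 with hR'
    have hR : 0 < R := by positivity
    have hrR : r < R := by rw [hR']; linarith
    obtain ⟨N₀, hN₀⟩ := Filter.eventually_atTop.mp (hmtop.eventually_ge_atTop (2 * (L * R)))
    set N := max p N₀ with hN'
    have hNp : p ≤ N := le_max_left _ _
    have hN : ∀ j, N ≤ j → 2 * (L * R) ≤ m j := fun j hj => hN₀ j ((le_max_right _ _).trans hj)
    obtain ⟨hdiff, hprod⟩ := prod_rep m hmpos L R hL hR N hN hmsum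
    have hPLeq : ∀ ζ ∈ Metric.ball (0:ℂ) R, PL ζ =
        (∏ i ∈ Finset.range N, (1 + (L:ℂ)^2 * ζ^2 / (m i : ℂ)^2)) *
          Complex.exp (∑' j : ℕ, Complex.log (1 + (L:ℂ)^2 * ζ^2 / (m (N + j) : ℂ)^2)) :=
      fun ζ hζ => by rw [hPL]; exact (hprod ζ hζ).tprod_eq
    have hPLdiff : DifferentiableOn ℂ PL (Metric.closedBall 0 r) :=
      (hdiff.congr hPLeq).mono (Metric.closedBall_subset_ball hrR)
    set B1 : ℝ := ∏ i ∈ Finset.range N, (1 + t^2 / (m i)^2) with hB1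
    have hB1pos : 0 < B1 := Finset.prod_pos fun i _ => by positivity
    set E1 : ℝ := Real.exp ((3/2) * (A' * p)) with hE1
    -- tail sum estimate
    have htail_le : ∑' j : ℕ, 1 / m (N + j) ≤ A' * p / t := by
      have h1 : ∑' j : ℕ, 1 / m (N + j) ≤ ∑' j : ℕ, 1 / m (p + j) := by
        have h2 := Summable.sum_add_tsum_nat_add (N - p) (hSsum p)
        have h3 : ∑' j : ℕ, 1 / m (N + j) = ∑' j : ℕ, 1 / m (p + (j + (N - p))) := by
          refine tsum_congr fun j => ?_
          congr 2
          omega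
        have h4 : 0 ≤ ∑ i ∈ Finset.range (N - p), 1 / m (p + i) :=
          Finset.sum_nonneg fun i _ => by have := hmpos (p + i); positivity
        rw [h3]
        linarith [h2]
      exact h1.trans (hS p hp)
    -- norm of the factors on the sphere
    have hwabs : ∀ (i : ℕ) (z : ℂ), ‖z‖ = r →
        ‖(L:ℂ)^2 * z^2 / (m i : ℂ)^2‖ = t^2 / (m i)^2 := by
      intro i z hz
      simp only [norm_div, norm_mul, norm_pow, Complex.norm_real, Real.norm_eq_abs, hz,
        abs_of_pos hL, abs_of_pos (hmpos i)]
      rw [← mul_pow, hLr]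
    have hmN : ∀ j : ℕ, 2 * t ≤ m (N + j) := by
      intro j
      have h1 := hN (N + j) (Nat.le_add_right _ _)
      have h2 : 2 * (L * r) ≤ 2 * (L * R) := by nlinarith
      rw [hLr] at h2
      linarith
    have hwt : ∀ j : ℕ, t^2 / (m (N+j))^2 ≤ 1/2 := by
      intro j
      have h2 := hmN j
      have hm2 := hmpos (N+j)
      rw [div_le_iff₀ (by positivity)]
      nlinarith
    have hlogb : ∀ z : ℂ, ‖z‖ = r → ∀ j : ℕ,
        ‖Complex.log (1 + (L:ℂ)^2 * z^2 / (m (N+j) : ℂ)^2)‖ ≤ (3/2) * t * (1 / m (N+j)) := by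
      intro z hz j
      have hm2 := hmpos (N+j)
      have h2 := hmN j
      have h1 : ‖(L:ℂ)^2 * z^2 / (m (N+j):ℂ)^2‖ ≤ 1/2 := by
        rw [show ‖(L:ℂ)^2 * z^2 / (m (N+j):ℂ)^2‖ = ‖(L:ℂ)^2 * z^2 / (m (N+j):ℂ)^2‖ from rfl,
          hwabs _ z hz]
        exact hwt j
      refine (Complex.norm_log_one_add_half_le_self h1).trans ?_
      rw [show ‖(L:ℂ)^2 * z^2 / (m (N+j):ℂ)^2‖ = ‖(L:ℂ)^2 * z^2 / (m (N+j):ℂ)^2‖ from rfl,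
        hwabs _ z hz]
      have hle : t ≤ m (N+j) := by linarith
      have hkey : t^2 / m (N+j)^2 ≤ t * (1 / m (N+j)) := by
        rw [div_le_iff₀ (by positivity : (0:ℝ) < (m (N+j))^2)]
        have hid : t * (1 / m (N+j)) * m (N+j)^2 = t * m (N+j) := by
          field_simp
        rw [hid]
        nlinarith
      calc 3/2 * (t^2 / m (N+j)^2) ≤ 3/2 * (t * (1 / m (N+j))) := by linarith
        _ = 3/2 * t * (1 / m (N+j)) := by ring
    have hsumlog : Summable (fun j : ℕ => (3/2) * t * (1 / m (N+j))) := (hSsum N).mul_left _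
    have hlogsum : ∀ z : ℂ, ‖z‖ = r →
        ∑' j : ℕ, ‖Complex.log (1 + (L:ℂ)^2 * z^2 / (m (N+j) : ℂ)^2)‖ ≤ (3/2) * (A' * p) := by
      intro z hz
      have hsum1 : Summable (fun j : ℕ =>
          ‖Complex.log (1 + (L:ℂ)^2 * z^2 / (m (N+j) : ℂ)^2)‖) :=
        Summable.of_nonneg_of_le (fun _ => norm_nonneg _) (hlogb z hz) hsumlog
      calc ∑' j : ℕ, ‖Complex.log (1 + (L:ℂ)^2 * z^2 / (m (N+j) : ℂ)^2)‖
          ≤ ∑' j : ℕ, (3/2) * t * (1 / m (N+j)) := Summable.tsum_le_tsum (hlogb z hz) hsum1 hsumlog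
        _ = (3/2) * t * ∑' j : ℕ, (1 / m (N+j)) := tsum_mul_left
        _ ≤ (3/2) * t * (A' * p / t) := by gcongr
        _ = (3/2) * (A' * p) := by field_simp
    have hsummablelog : ∀ z : ℂ, ‖z‖ = r →
        Summable (fun j : ℕ => Complex.log (1 + (L:ℂ)^2 * z^2 / (m (N+j) : ℂ)^2)) := fun z hz =>
      Summable.of_norm_bounded hsumlog (hlogb z hz)
    have hsphere : ∀ z ∈ Metric.sphere (0:ℂ) r, ‖PL z‖ ≤ B1 * E1 := by
      intro z hz
      have hzr : ‖z‖ = r := by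
        simpa [Complex.dist_eq] using hz
      have hzball : z ∈ Metric.ball (0:ℂ) R := by
        rw [mem_ball_zero_iff, show ‖z‖ = ‖z‖ from rfl, hzr]
        exact hrR
      rw [hPLeq z hzball, norm_mul]
      have habs1 : ‖∏ i ∈ Finset.range N, (1 + (L:ℂ)^2*z^2/(m i:ℂ)^2)‖ ≤ B1 := by
        rw [norm_prod]
        refine Finset.prod_le_prod (fun i _ => norm_nonneg _) fun i _ => ?_
        calc ‖1 + (L:ℂ)^2*z^2/(m i:ℂ)^2‖
            ≤ ‖(1:ℂ)‖ + ‖(L:ℂ)^2*z^2/(m i:ℂ)^2‖ := norm_add_le _ _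
          _ = 1 + t^2/(m i)^2 := by rw [norm_one, hwabs i z hzr]
      have habs2 : ‖Complex.exp
          (∑' j : ℕ, Complex.log (1 + (L:ℂ)^2 * z^2 / (m (N + j) : ℂ)^2))‖ ≤ E1 := by
        rw [Complex.norm_exp]
        refine Real.exp_le_exp.mpr ?_
        refine le_trans (Complex.re_le_norm _) ?_
        have hsum1 : Summable (fun j : ℕ =>
            ‖Complex.log (1 + (L:ℂ)^2 * z^2 / (m (N+j) : ℂ)^2)‖) :=
          Summable.of_nonneg_of_le (fun _ => norm_nonneg _) (hlogb z hzr) hsumlog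
        exact le_trans (norm_tsum_le_tsum_norm hsum1) (hlogsum z hzr)
      exact mul_le_mul habs1 habs2 (norm_nonneg _) hB1pos.le
    -- Cauchy estimate
    have hcau := cauchy_bound hr hPLdiff hsphere p
    have hE1pos : 0 < E1 := Real.exp_pos _
    have hap : ‖a p‖ ≤ (B1 * E1) / r ^ p := by
      rw [ha, norm_div, Complex.norm_natCast]
      rw [div_le_iff₀ (by positivity : (0:ℝ) < (p.factorial : ℝ))]
      calc ‖iteratedDeriv p PL 0‖ ≤ p.factorial * (B1 * E1) / r ^ p := hcau
        _ = B1 * E1 / r ^ p * p.factorial := by ring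
    -- bound B1
    have hB1le : B1 ≤ (∏ i ∈ Finset.range p, (2 * t^2 / (m i)^2)) * Real.exp (A' * p) := by
      have hsplit : B1 = (∏ i ∈ Finset.range p, (1 + t^2/(m i)^2)) *
          (∏ i ∈ Finset.Ico p N, (1 + t^2/(m i)^2)) := by
        rw [hB1, Finset.prod_range_mul_prod_Ico _ hNp]
      rw [hsplit]
      have hpart1 : ∏ i ∈ Finset.range p, (1 + t^2/(m i)^2)
          ≤ ∏ i ∈ Finset.range p, (2 * t^2 / (m i)^2) := by
        refine Finset.prod_le_prod (fun i _ => by have := hmpos i; positivity) fun i hi => ?_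
        have hmi := hmpos i
        have hmle : m i ≤ t := hmmono (le_of_lt (Finset.mem_range.mp hi))
        have h1 : 1 ≤ t^2/(m i)^2 := by
          rw [le_div_iff₀ (by positivity)]
          nlinarith
        calc 1 + t^2/(m i)^2 ≤ t^2/(m i)^2 + t^2/(m i)^2 := by linarith
          _ = 2 * t^2/(m i)^2 := by ring
      have hpart2 : ∏ i ∈ Finset.Ico p N, (1 + t^2/(m i)^2) ≤ Real.exp (A' * p) := by
        have hstep : ∀ i ∈ Finset.Ico p N, 1 + t^2/(m i)^2 ≤ Real.exp (t * (1 / m i)) := by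
          intro i hi
          have hip : p ≤ i := (Finset.mem_Ico.mp hi).1
          have hmi := hmpos i
          have hle : t ≤ m i := hmmono hip
          have hkey : t^2 / (m i)^2 ≤ t * (1 / m i) := by
            rw [div_le_iff₀ (by positivity : (0:ℝ) < (m i)^2)]
            have hid : t * (1 / m i) * (m i)^2 = t * m i := by
              field_simp
            rw [hid]
            nlinarith
          have h2 : t * (1 / m i) + 1 ≤ Real.exp (t * (1 / m i)) := Real.add_one_le_exp _
          linarith
        calc ∏ i ∈ Finset.Ico p N, (1 + t^2/(m i)^2)
            ≤ ∏ i ∈ Finset.Ico p N, Real.exp (t * (1 / m i)) :=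
              Finset.prod_le_prod (fun i _ => by have := hmpos i; positivity) hstep
          _ = Real.exp (∑ i ∈ Finset.Ico p N, t * (1 / m i)) := (Real.exp_sum _ _).symm
          _ ≤ Real.exp (A' * p) := by
              refine Real.exp_le_exp.mpr ?_
              rw [← Finset.mul_sum]
              have hfin : ∑ i ∈ Finset.Ico p N, (1 / m i) ≤ ∑' j : ℕ, 1 / m (p + j) := by
                rw [Finset.sum_Ico_eq_sum_range]
                exact Summable.sum_le_tsum _ (fun j _ => by have := hmpos (p + j); positivity) (hSsum p)
              calc t * ∑ i ∈ Finset.Ico p N, (1 / m i) ≤ t * (A' * p / t) := by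
                    gcongr
                    exact hfin.trans (hS p hp)
                _ = A' * p := by field_simp
      exact mul_le_mul hpart1 hpart2 (Finset.prod_nonneg fun i _ => by
        have := hmpos i; positivity) (Finset.prod_nonneg fun i _ => by
        have := hmpos i; positivity)
    have hprodeq : ∏ i ∈ Finset.range p, (2 * t^2 / (m i)^2) = 2^p * t^(2*p) / (M p)^2 := by
      rw [Finset.prod_div_distrib, Finset.prod_const, Finset.prod_pow, ← hMprod,
        Finset.card_range, mul_pow, ← pow_mul]
    have htp : t^p ≤ A * H^(2*p) * M p := by
      have h1 : t^p ≤ ∏ i ∈ Finset.Ico p (2*p), m i := by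
        have he : t^p = ∏ _i ∈ Finset.Ico p (2*p), t := by
          rw [Finset.prod_const, Nat.card_Ico]
          congr 1
          omega
        rw [he]
        exact Finset.prod_le_prod (fun _ _ => ht.le) fun i hi =>
          hmmono (Finset.mem_Ico.mp hi).1
      have h2 : M p * ∏ i ∈ Finset.Ico p (2*p), m i = M (2*p) := by
        rw [hMprod (2*p), hMprod p, Finset.prod_range_mul_prod_Ico _ (by omega)]
      have h3 := hAH (2*p) p (by omega)
      rw [show 2*p - p = p from by omega] at h3
      have hMp := hMpos p
      have h4 : t^p * M p ≤ A * H^(2*p) * M p * M p := by nlinarith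
      exact le_of_mul_le_mul_right (by nlinarith) hMp
    -- final arithmetic
    have hrp : r ^ p = t ^ p / L ^ p := by rw [hr', div_pow]
    have hexp : Real.exp (A' * p) * E1 = (Real.exp ((5/2) * A')) ^ p := by
      rw [hE1, ← Real.exp_add, ← Real.exp_nat_mul]
      congr 1
      ring
    calc ‖a p‖ ≤ (B1 * E1) / r ^ p := hap
      _ ≤ ((2^p * t^(2*p) / (M p)^2 * Real.exp (A' * p)) * E1) / r ^ p := by
          gcongr
          rw [← hprodeq]
          exact hB1le
      _ = 2^p * L^p * (Real.exp (A' * p) * E1) * t^p / (M p)^2 := by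
          rw [hrp]
          have hMp := (hMpos p).ne'
          have hLp : (0:ℝ) < L ^ p := by positivity
          have htpp : (0:ℝ) < t ^ p := by positivity
          rw [pow_mul]
          field_simp
          ring
      _ ≤ 2^p * L^p * (Real.exp (A' * p) * E1) * (A * H^(2*p) * M p) / (M p)^2 := by
          gcongr
      _ = A * (2 * L * H ^ 2 * Real.exp ((5/2) * A')) ^ p / M p := by
          rw [hexp, pow_mul]
          have hMp := (hMpos p).ne'
          field_simp
          ring
  refine ⟨max A 1, 2 * L * H ^ 2 * Real.exp ((5/2) * A'), lt_max_of_lt_right one_pos,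
    by positivity, fun p => ?_⟩
  rcases Nat.eq_zero_or_pos p with rfl | hp
  · have h0 : a 0 = 1 := by
      rw [ha, iteratedDeriv_zero, hPL]
      simp
    rw [h0, hM0]
    simp [le_max_right]
  · refine (hmain p hp).trans ?_
    gcongr
    · exact (hMpos p).le
    · exact le_max_left _ _
end

section
/- Let (L_p)_{p≥1} be a strictly decreasing sequence of positive real numbers with L_p → 0, define the entire function P(ζ) := ∏_{p=1}^∞ (1 + L_p²ζ²/m_p²), and let a_p := (iteratedDeriv p P 0)/p! be its p-th Taylor coefficient at 0. Then for every k > 0 there exists a constant C_k > 0 such that |a_p| ≤ C_k · k^p / M_p for all p ∈ ℕ. -/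
open Complex Finset Filter
open scoped Real Topology BigOperators

lemma aux_cauchy (P : ℂ → ℂ) (hPdiff : Differentiable ℂ P) {r : ℝ} (hr : 0 < r) (B : ℝ)
    (hB : ∀ ζ : ℂ, ‖ζ‖ = r → ‖P ζ‖ ≤ B) (p : ℕ) :
    ‖iteratedDeriv p P 0‖ ≤ p.factorial * B / r ^ p := by
  set R : NNReal := ⟨r, hr.le⟩ with hRdef
  have hR0 : 0 < R := by exact_mod_cast hr
  have h := hPdiff.hasFPowerSeriesOnBall 0 hR0
  have h1 := h.factorial_smul (1 : ℂ) p
  have hB0 : 0 ≤ B := le_trans (norm_nonneg _) (hB (r : ℂ) (by simp [abs_of_pos hr]))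
  have hcoeff : ‖(cauchyPowerSeries P 0 (R : ℝ) p) (fun _ => (1 : ℂ))‖ ≤ B / r ^ p := by
    have h2 := (cauchyPowerSeries P 0 (R : ℝ) p).le_opNorm (fun _ => (1 : ℂ))
    have h3 := norm_cauchyPowerSeries_le P 0 (R : ℝ) p
    have hint : (∫ θ : ℝ in (0)..2 * π, ‖P (circleMap 0 (R : ℝ) θ)‖) ≤ 2 * π * B := by
      have hle : ∀ θ ∈ Set.Icc (0 : ℝ) (2 * π), ‖P (circleMap 0 (R : ℝ) θ)‖ ≤ B := by
        intro θ _
        exact hB _ (by rw [norm_circleMap_zero]; exact abs_of_pos hr)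
      calc (∫ θ : ℝ in (0)..2 * π, ‖P (circleMap 0 (R : ℝ) θ)‖)
          ≤ ∫ _ : ℝ in (0)..2 * π, B := by
            apply intervalIntegral.integral_mono_on (by positivity)
            · exact ((hPdiff.continuous.comp (continuous_circleMap 0 (R : ℝ))).norm).intervalIntegrable _ _
            · exact intervalIntegrable_const
            · exact hle
        _ = 2 * π * B := by simp [mul_comm]
    calc ‖(cauchyPowerSeries P 0 (R : ℝ) p) (fun _ => (1 : ℂ))‖
        ≤ ‖cauchyPowerSeries P 0 (R : ℝ) p‖ * ∏ _i : Fin p, ‖(1 : ℂ)‖ := h2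
      _ = ‖cauchyPowerSeries P 0 (R : ℝ) p‖ := by simp
      _ ≤ ((2 * π)⁻¹ * ∫ θ : ℝ in (0)..2 * π, ‖P (circleMap 0 (R : ℝ) θ)‖) * |(R : ℝ)|⁻¹ ^ p := h3
      _ ≤ ((2 * π)⁻¹ * (2 * π * B)) * |(R : ℝ)|⁻¹ ^ p := by
          have hpi : (0:ℝ) < 2 * π := by positivity
          gcongr
      _ = B / r ^ p := by
          rw [abs_of_pos (show (0:ℝ) < (R : ℝ) from hr)]
          have : (2 * π)⁻¹ * (2 * π * B) = B := by
            field_simp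
          rw [this]
          rw [inv_pow, div_eq_mul_inv]
          norm_num [hRdef]
          exact Or.inl rfl
  have heq : ‖iteratedDeriv p P 0‖ = (p.factorial : ℝ) *
      ‖(cauchyPowerSeries P 0 (R : ℝ) p) (fun _ => (1 : ℂ))‖ := by
    rw [iteratedDeriv_eq_iteratedFDeriv, ← h1,
      ← Nat.cast_smul_eq_nsmul ℝ, norm_smul]
    simp
  rw [heq, mul_div_assoc]
  exact mul_le_mul_of_nonneg_left hcoeff (by positivity)

set_option maxHeartbeats 8000000 in
/-- Let `(M_p)_{p≥0}` be a sequence of positive reals with `M_0 = 1` satisfying Komatsu's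
conditions (M.1), (M.2), (M.3), and `m_p := M_p/M_{p-1}` (here `m p` denotes `m_{p+1}`).
Let `(L_p)` be a strictly decreasing sequence of positive reals tending to `0` (here `l p`
denotes `L_{p+1}`), let `P(ζ) := ∏_{p=1}^∞ (1 + L_p²ζ²/m_p²)` (an entire function), and let
`a_p := (iteratedDeriv p P 0)/p!` be its Taylor coefficients at `0`.  Then for every
`k > 0` there exists `C_k > 0` with `|a_p| ≤ C_k · k^p / M_p` for all `p ∈ ℕ`. -/
theorem taylor_coeff_bound_Roumieu
    (M : ℕ → ℝ) (hMpos : ∀ p, 0 < M p) (hM0 : M 0 = 1)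
    (hM1 : ∀ p : ℕ, (M (p + 1)) ^ 2 ≤ M p * M (p + 2))
    (hM2 : ∃ A H : ℝ, 0 < A ∧ 0 < H ∧
      ∀ p q : ℕ, q ≤ p → M p ≤ A * H ^ p * M q * M (p - q))
    (hM3 : ∃ A' : ℝ, 0 < A' ∧ ∀ p : ℕ, 1 ≤ p →
      ∑' j : ℕ, M (p + j) / M (p + j + 1) ≤ A' * p * M p / M (p + 1))
    (m : ℕ → ℝ) (hm : ∀ p, m p = M (p + 1) / M p)
    (hmmono : Monotone m) (hmsum : Summable fun p => 1 / m p)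
    (hmtop : Filter.Tendsto m Filter.atTop Filter.atTop)
    (l : ℕ → ℝ) (hlpos : ∀ p, 0 < l p) (hlanti : StrictAnti l)
    (hl0 : Filter.Tendsto l Filter.atTop (nhds 0))
    (P : ℂ → ℂ) (hP : ∀ ζ, P ζ = ∏' p : ℕ, (1 + (l p : ℂ) ^ 2 * ζ ^ 2 / (m p : ℂ) ^ 2))
    (a : ℕ → ℂ) (ha : ∀ p, a p = iteratedDeriv p P 0 / (p.factorial : ℂ)) :
    ∀ k : ℝ, 0 < k → ∃ Ck : ℝ, 0 < Ck ∧ ∀ p : ℕ,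
      ‖a p‖ ≤ Ck * k ^ p / M p := by
  -- basic positivity facts
  have hmpos : ∀ p, 0 < m p := fun p => by rw [hm]; exact div_pos (hMpos _) (hMpos _)
  have hMprod : ∀ p : ℕ, M p = ∏ q ∈ Finset.range p, m q := by
    intro p
    induction p with
    | zero => simp [hM0]
    | succ n ih =>
      rw [Finset.prod_range_succ, ← ih, hm, mul_comm, div_mul_cancel₀ _ (ne_of_gt (hMpos n))]
  have hMp1 : ∀ p, M (p + 1) = m p * M p := by
    intro p; rw [hm, div_mul_cancel₀ _ (ne_of_gt (hMpos p))]
  have hlle : ∀ q, l q ≤ l 0 := fun q => hlanti.antitone (Nat.zero_le q)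
  -- summability of the majorant terms
  have husum : ∀ c : ℝ, Summable (fun q : ℕ => (l q) ^ 2 * c ^ 2 / (m q) ^ 2) := by
    intro c
    apply Summable.of_nonneg_of_le (fun q => by positivity)
      (fun q => ?_) (hmsum.mul_left ((l 0) ^ 2 * c ^ 2 / m 0))
    have h1 : (l q) ^ 2 * c ^ 2 / (m q) ^ 2 ≤ ((l 0) ^ 2 * c ^ 2) / (m 0 * m q) := by
      apply div_le_div₀ (by positivity) ?_ (mul_pos (hmpos 0) (hmpos q)) ?_
      · exact mul_le_mul_of_nonneg_right
          (pow_le_pow_left₀ (hlpos q).le (hlle q) 2) (sq_nonneg _)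
      · rw [pow_two]
        exact mul_le_mul_of_nonneg_right (hmmono (Nat.zero_le q)) (hmpos q).le
    calc (l q) ^ 2 * c ^ 2 / (m q) ^ 2 ≤ ((l 0) ^ 2 * c ^ 2) / (m 0 * m q) := h1
      _ = (l 0) ^ 2 * c ^ 2 / m 0 * (1 / m q) := by
          rw [div_mul_div_comm, mul_one]
  -- computation of absolute values of factors
  have habs : ∀ (q : ℕ) (ζ : ℂ), ‖(l q : ℂ) ^ 2 * ζ ^ 2 / (m q : ℂ) ^ 2‖
      = (l q) ^ 2 * (‖ζ‖) ^ 2 / (m q) ^ 2 := by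
    intro q ζ
    rw [norm_div, norm_mul, norm_pow, norm_pow, norm_pow, Complex.norm_real, Complex.norm_real,
      Real.norm_eq_abs, Real.norm_eq_abs, abs_of_pos (hlpos q), abs_of_pos (hmpos q)]
  -- the representation lemma
  have rep : ∀ (n : ℕ) (ζ : ℂ), (∀ q, n ≤ q → (l q) ^ 2 * (‖ζ‖) ^ 2 / (m q) ^ 2 ≤ 1 / 2) →
      HasProd (fun q : ℕ => 1 + (l q : ℂ) ^ 2 * ζ ^ 2 / (m q : ℂ) ^ 2)
        ((∏ q ∈ Finset.range n, (1 + (l q : ℂ) ^ 2 * ζ ^ 2 / (m q : ℂ) ^ 2)) *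
          Complex.exp (∑' j : ℕ, Complex.log (1 + (l (j + n) : ℂ) ^ 2 * ζ ^ 2 / (m (j + n) : ℂ) ^ 2))) := by
    intro n ζ hn
    have hne : ∀ j : ℕ, (1 + (l (j + n) : ℂ) ^ 2 * ζ ^ 2 / (m (j + n) : ℂ) ^ 2) ≠ 0 := by
      intro j h0
      have hw : (l (j + n) : ℂ) ^ 2 * ζ ^ 2 / (m (j + n) : ℂ) ^ 2 = -1 := by
        linear_combination h0
      have h2 := habs (j + n) ζ
      rw [hw] at h2
      simp only [norm_neg, norm_one] at h2
      have := hn (j + n) (Nat.le_add_left n j)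
      rw [← h2] at this
      norm_num at this
    have hlogsum : Summable (fun j : ℕ =>
        Complex.log (1 + (l (j + n) : ℂ) ^ 2 * ζ ^ 2 / (m (j + n) : ℂ) ^ 2)) := by
      apply Summable.of_norm_bounded
        (g := fun j => (3 / 2) * ((l (j + n)) ^ 2 * (‖ζ‖) ^ 2 / (m (j + n)) ^ 2))
        (((summable_nat_add_iff n).mpr (husum (‖ζ‖))).mul_left (3 / 2))
      intro j
      have hb : ‖(l (j + n) : ℂ) ^ 2 * ζ ^ 2 / (m (j + n) : ℂ) ^ 2‖ ≤ 1 / 2 := by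
        rw [habs]
        exact hn (j + n) (Nat.le_add_left n j)
      have := Complex.norm_log_one_add_half_le_self hb
      rwa [habs] at this
    have h1 := hlogsum.hasSum.cexp
    have h2 : (Complex.exp ∘ fun j : ℕ => Complex.log
        (1 + (l (j + n) : ℂ) ^ 2 * ζ ^ 2 / (m (j + n) : ℂ) ^ 2))
        = fun j : ℕ => 1 + (l (j + n) : ℂ) ^ 2 * ζ ^ 2 / (m (j + n) : ℂ) ^ 2 :=
      funext fun j => Complex.exp_log (hne j)
    rw [h2] at h1
    exact h1.prod_range_mul
  -- the modulus bound lemma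
  have key : ∀ (n : ℕ) (ζ : ℂ), (∀ q, n ≤ q → (l q) ^ 2 * (‖ζ‖) ^ 2 / (m q) ^ 2 ≤ 1 / 2) →
      ‖P ζ‖ ≤
        (∏ q ∈ Finset.range n, (1 + (l q) ^ 2 * (‖ζ‖) ^ 2 / (m q) ^ 2)) *
          Real.exp ((3 / 2) * ∑' j : ℕ, (l (j + n)) ^ 2 * (‖ζ‖) ^ 2 / (m (j + n)) ^ 2) := by
    intro n ζ hn
    have hPz := (rep n ζ hn).tprod_eq
    rw [hP ζ, hPz, norm_mul]
    have hlogsum : Summable (fun j : ℕ =>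
        Complex.log (1 + (l (j + n) : ℂ) ^ 2 * ζ ^ 2 / (m (j + n) : ℂ) ^ 2)) := by
      apply Summable.of_norm_bounded
        (g := fun j => (3 / 2) * ((l (j + n)) ^ 2 * (‖ζ‖) ^ 2 / (m (j + n)) ^ 2))
        (((summable_nat_add_iff n).mpr (husum (‖ζ‖))).mul_left (3 / 2))
      intro j
      have hb : ‖(l (j + n) : ℂ) ^ 2 * ζ ^ 2 / (m (j + n) : ℂ) ^ 2‖ ≤ 1 / 2 := by
        rw [habs]
        exact hn (j + n) (Nat.le_add_left n j)
      have := Complex.norm_log_one_add_half_le_self hb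
      rwa [habs] at this
    have hnormsum : Summable (fun j : ℕ =>
        ‖Complex.log (1 + (l (j + n) : ℂ) ^ 2 * ζ ^ 2 / (m (j + n) : ℂ) ^ 2)‖) := by
      apply Summable.of_nonneg_of_le (fun j => norm_nonneg _) (fun j => ?_)
        (((summable_nat_add_iff n).mpr (husum (‖ζ‖))).mul_left (3 / 2))
      have hb : ‖(l (j + n) : ℂ) ^ 2 * ζ ^ 2 / (m (j + n) : ℂ) ^ 2‖ ≤ 1 / 2 := by
        rw [habs]
        exact hn (j + n) (Nat.le_add_left n j)
      have := Complex.norm_log_one_add_half_le_self hb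
      rwa [habs] at this
    apply mul_le_mul ?_ ?_ (norm_nonneg _) ?_
    · rw [norm_prod]
      apply Finset.prod_le_prod (fun q _ => norm_nonneg _)
      intro q _
      calc ‖1 + (l q : ℂ) ^ 2 * ζ ^ 2 / (m q : ℂ) ^ 2‖
          ≤ ‖(1 : ℂ)‖ + ‖(l q : ℂ) ^ 2 * ζ ^ 2 / (m q : ℂ) ^ 2‖ :=
            norm_add_le _ _
        _ = 1 + (l q) ^ 2 * (‖ζ‖) ^ 2 / (m q) ^ 2 := by rw [norm_one, habs]
    · rw [Complex.norm_exp]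
      apply Real.exp_le_exp.2
      calc (∑' j : ℕ, Complex.log (1 + (l (j + n) : ℂ) ^ 2 * ζ ^ 2 / (m (j + n) : ℂ) ^ 2)).re
          ≤ ‖∑' j : ℕ, Complex.log (1 + (l (j + n) : ℂ) ^ 2 * ζ ^ 2 / (m (j + n) : ℂ) ^ 2)‖ :=
            Complex.re_le_norm _
        _ ≤ ∑' j : ℕ, ‖Complex.log (1 + (l (j + n) : ℂ) ^ 2 * ζ ^ 2 / (m (j + n) : ℂ) ^ 2)‖ := by
            exact norm_tsum_le_tsum_norm hnormsum
        _ ≤ ∑' j : ℕ, (3 / 2) * ((l (j + n)) ^ 2 * (‖ζ‖) ^ 2 / (m (j + n)) ^ 2) := by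
            apply Summable.tsum_le_tsum ?_ hnormsum
              (((summable_nat_add_iff n).mpr (husum (‖ζ‖))).mul_left (3 / 2))
            intro j
            have hb : ‖(l (j + n) : ℂ) ^ 2 * ζ ^ 2 / (m (j + n) : ℂ) ^ 2‖ ≤ 1 / 2 := by
              rw [habs]
              exact hn (j + n) (Nat.le_add_left n j)
            have := Complex.norm_log_one_add_half_le_self hb
            rwa [habs] at this
        _ = (3 / 2) * ∑' j : ℕ, (l (j + n)) ^ 2 * (‖ζ‖) ^ 2 / (m (j + n)) ^ 2 :=
            tsum_mul_left
    · exact Finset.prod_nonneg fun q _ => by positivity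
  -- differentiability of P
  have hdiff : Differentiable ℂ P := by
    intro z
    set R : ℝ := ‖z‖ + 1 with hRdef
    have hR : 0 < R := by positivity
    obtain ⟨n, hn⟩ := (hmtop.eventually_ge_atTop (1 + 2 * (l 0) ^ 2 * R ^ 2)).exists_forall_of_atTop
    have hsmall : ∀ ζ : ℂ, ‖ζ‖ < R → ∀ q, n ≤ q →
        (l q) ^ 2 * (‖ζ‖) ^ 2 / (m q) ^ 2 ≤ 1 / 2 := by
      intro ζ hζ q hq
      have h1 := hn q hq
      have hm1 : 1 ≤ m q := le_trans (by nlinarith [sq_nonneg (l 0 * R)]) h1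
      rw [div_le_iff₀ (by positivity)]
      have h2 : (l q) ^ 2 * (‖ζ‖) ^ 2 ≤ (l 0) ^ 2 * R ^ 2 := by
        have h3 := hlle q
        have h4 := (hlpos q).le
        have h5 := norm_nonneg ζ
        exact mul_le_mul (pow_le_pow_left₀ h4 h3 2) (pow_le_pow_left₀ h5 hζ.le 2)
          (by positivity) (by positivity)
      nlinarith
    set U := Metric.ball (0 : ℂ) R with hUdef
    have hUopen : IsOpen U := Metric.isOpen_ball
    have hmem : ∀ ζ : ℂ, ζ ∈ U → ‖ζ‖ < R := by
      intro ζ hζ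
      rwa [hUdef, Metric.mem_ball, dist_zero_right] at hζ
    have hzU : z ∈ U := by
      rw [hUdef, Metric.mem_ball, dist_zero_right]
      simp [hRdef]
    have hg2 : DifferentiableOn ℂ (fun ζ : ℂ =>
        ∑' j : ℕ, Complex.log (1 + (l (j + n) : ℂ) ^ 2 * ζ ^ 2 / (m (j + n) : ℂ) ^ 2)) U := by
      apply Complex.differentiableOn_tsum_of_summable_norm
        (u := fun j => (3 / 2) * ((l (j + n)) ^ 2 * R ^ 2 / (m (j + n)) ^ 2))
        (((summable_nat_add_iff n).mpr (husum R)).mul_left (3 / 2))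
      · intro j
        apply DifferentiableOn.clog
        · apply DifferentiableOn.add (differentiableOn_const _)
          apply DifferentiableOn.div_const
          exact (((differentiable_pow 2).const_mul _).differentiableOn)
        · intro x hx
          have hb : ‖(l (j + n) : ℂ) ^ 2 * x ^ 2 / (m (j + n) : ℂ) ^ 2‖ ≤ 1 / 2 := by
            rw [habs]
            exact hsmall x (hmem x hx) _ (Nat.le_add_left n j)
          apply Complex.mem_slitPlane_iff.2
          left
          have hre := Complex.abs_re_le_norm ((l (j + n) : ℂ) ^ 2 * x ^ 2 / (m (j + n) : ℂ) ^ 2)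
          rw [abs_le] at hre
          simp only [Complex.add_re, Complex.one_re]
          linarith [hre.1]
      · exact hUopen
      · intro j w hw
        have hb : ‖(l (j + n) : ℂ) ^ 2 * w ^ 2 / (m (j + n) : ℂ) ^ 2‖ ≤ 1 / 2 := by
          rw [habs]
          exact hsmall w (hmem w hw) _ (Nat.le_add_left n j)
        calc ‖Complex.log (1 + (l (j + n) : ℂ) ^ 2 * w ^ 2 / (m (j + n) : ℂ) ^ 2)‖
            ≤ 3 / 2 * ‖(l (j + n) : ℂ) ^ 2 * w ^ 2 / (m (j + n) : ℂ) ^ 2‖ :=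
              Complex.norm_log_one_add_half_le_self hb
          _ ≤ 3 / 2 * ((l (j + n)) ^ 2 * R ^ 2 / (m (j + n)) ^ 2) := by
              rw [habs]
              have h5 := norm_nonneg w
              have h6 := (hmem w hw).le
              gcongr
    have hg1 : Differentiable ℂ (fun ζ : ℂ =>
        ∏ q ∈ Finset.range n, (1 + (l q : ℂ) ^ 2 * ζ ^ 2 / (m q : ℂ) ^ 2)) := by
      apply Differentiable.fun_finsetProd
      intro i _
      apply Differentiable.add (differentiable_const _)
      apply Differentiable.div_const
      exact (differentiable_pow 2).const_mul _
    have hgdiff : DifferentiableOn ℂ (fun ζ : ℂ =>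
        (∏ q ∈ Finset.range n, (1 + (l q : ℂ) ^ 2 * ζ ^ 2 / (m q : ℂ) ^ 2)) *
          Complex.exp (∑' j : ℕ, Complex.log
            (1 + (l (j + n) : ℂ) ^ 2 * ζ ^ 2 / (m (j + n) : ℂ) ^ 2))) U :=
      (hg1.differentiableOn).mul hg2.cexp
    have hPeq : P =ᶠ[nhds z] (fun ζ : ℂ =>
        (∏ q ∈ Finset.range n, (1 + (l q : ℂ) ^ 2 * ζ ^ 2 / (m q : ℂ) ^ 2)) *
          Complex.exp (∑' j : ℕ, Complex.log
            (1 + (l (j + n) : ℂ) ^ 2 * ζ ^ 2 / (m (j + n) : ℂ) ^ 2))) := by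
      apply Filter.eventually_of_mem (hUopen.mem_nhds hzU)
      intro ζ hζ
      rw [hP ζ, (rep n ζ (hsmall ζ (hmem ζ hζ))).tprod_eq]
    exact (hgdiff.differentiableAt (hUopen.mem_nhds hzU)).congr_of_eventuallyEq hPeq
  -- main estimate
  obtain ⟨A, H, hA, hH, h2⟩ := hM2
  obtain ⟨A', hA', h3⟩ := hM3
  intro k hk
  set E : ℝ := 2 * Real.exp A' * H ^ 2 with hEdef
  have hE : 0 < E := by positivity
  obtain ⟨ε, hε, hEk⟩ : ∃ ε : ℝ, 0 < ε ∧ E * ε ≤ k := by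
    refine ⟨k / (E + k), div_pos hk (by positivity), ?_⟩
    rw [← mul_div_assoc, div_le_iff₀ (by positivity)]
    nlinarith
  obtain ⟨p0, hp0⟩ :=
    (Filter.Tendsto.eventually_lt_const (show (0:ℝ) < ε / 2 by positivity) hl0).exists_forall_of_atTop
  obtain ⟨K, hK2, hKbig⟩ : ∃ K : ℝ, (2:ℝ) ≤ K ∧ 2 + (l 0) ^ 2 / ε ^ 2 ≤ K :=
    ⟨2 + (l 0) ^ 2 / ε ^ 2, le_add_of_nonneg_right (by positivity), le_rfl⟩
  have hKpos : (0:ℝ) < K := lt_of_lt_of_le two_pos hK2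
  set C1 : ℝ := 2 * Real.exp A' * A * K ^ p0 with hC1def
  have hC1 : 0 < C1 := by positivity
  have main : ∀ p : ℕ, p0 ≤ p → ‖a p‖ ≤ C1 * k ^ p / M p := by
    intro p hp
    set r : ℝ := m p / ε with hrdef
    have hr : 0 < r := div_pos (hmpos p) hε
    have hyp : ∀ q, p + 1 ≤ q → (l q) ^ 2 * r ^ 2 / (m q) ^ 2 ≤ 1 / 2 := by
      intro q hq
      have hlq : l q < ε / 2 := hp0 q (by omega)
      have hmq : m p ≤ m q := hmmono (by omega)
      rw [div_le_iff₀ (pow_pos (hmpos q) 2)]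
      have h1 : (l q) ^ 2 * r ^ 2 ≤ (ε / 2) ^ 2 * (m p / ε) ^ 2 := by
        rw [hrdef]
        exact mul_le_mul_of_nonneg_right (pow_le_pow_left₀ (hlpos q).le hlq.le 2) (by positivity)
      have h2' : (ε / 2) ^ 2 * (m p / ε) ^ 2 = (m p) ^ 2 / 4 := by
        field_simp
        ring
      rw [h2'] at h1
      nlinarith [hmpos p, hmpos q]
    have hbridge : (m p) ^ (p + 1) / M (p + 1) = (m p) ^ p / M p := by
      rw [hMp1 p, pow_succ, mul_comm (m p) (M p)]
      rw [mul_div_mul_right _ _ (ne_of_gt (hmpos p))]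
    set B : ℝ := (K ^ p0 * 2 ^ (p + 1)) * ((m p) ^ p / M p) ^ 2 *
      Real.exp (A' * (p + 1)) with hBdef
    have htail : (3 / 2) * ∑' j : ℕ, (l (j + (p + 1))) ^ 2 * r ^ 2 / (m (j + (p + 1))) ^ 2
        ≤ A' * (p + 1) := by
      have hsum1 : Summable (fun j : ℕ => (l (j + (p + 1))) ^ 2 * r ^ 2 / (m (j + (p + 1))) ^ 2) :=
        (summable_nat_add_iff (p + 1)).mpr (husum r)
      have hsum2 : Summable (fun j : ℕ =>
          (m p) ^ 2 / (4 * m (p + 1)) * (1 / m (j + (p + 1)))) :=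
        ((summable_nat_add_iff (p + 1)).mpr hmsum).mul_left _
      have hterm : ∀ j : ℕ, (l (j + (p + 1))) ^ 2 * r ^ 2 / (m (j + (p + 1))) ^ 2 ≤
          (m p) ^ 2 / (4 * m (p + 1)) * (1 / m (j + (p + 1))) := by
        intro j
        have hlq : l (j + (p + 1)) < ε / 2 := hp0 _ (by omega)
        have hm1 : m (p + 1) ≤ m (j + (p + 1)) := hmmono (Nat.le_add_left _ _)
        have hmppos := hmpos (p + 1)
        have hmjpos := hmpos (j + (p + 1))
        calc (l (j + (p + 1))) ^ 2 * r ^ 2 / (m (j + (p + 1))) ^ 2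
            ≤ ((ε / 2) ^ 2 * (m p / ε) ^ 2) / (m (p + 1) * m (j + (p + 1))) := by
              apply div_le_div₀ (by positivity) ?_ (mul_pos hmppos hmjpos) ?_
              · rw [hrdef]
                exact mul_le_mul_of_nonneg_right
                  (pow_le_pow_left₀ (hlpos _).le hlq.le 2) (by positivity)
              · rw [pow_two]
                exact mul_le_mul_of_nonneg_right hm1 hmjpos.le
          _ = (m p) ^ 2 / (4 * m (p + 1)) * (1 / m (j + (p + 1))) := by
              field_simp [hε.ne', hmppos.ne', hmjpos.ne']
              ring
      have hts := Summable.tsum_le_tsum hterm hsum1 hsum2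
      have hts2 : ∑' j : ℕ, (m p) ^ 2 / (4 * m (p + 1)) * (1 / m (j + (p + 1)))
          = (m p) ^ 2 / (4 * m (p + 1)) * ∑' j : ℕ, 1 / m (j + (p + 1)) := tsum_mul_left
      have h3' : ∑' j : ℕ, 1 / m (j + (p + 1)) ≤ A' * (p + 1) / m (p + 1) := by
        have h30 := h3 (p + 1) (by omega)
        have heq2 : ∀ j : ℕ, M ((p + 1) + j) / M ((p + 1) + j + 1) = 1 / m (j + (p + 1)) := by
          intro j
          rw [hm, one_div_div]
          congr 2 <;> omega
        rw [tsum_congr heq2] at h30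
        refine le_trans h30 (le_of_eq ?_)
        rw [hm]
        push_cast
        have hM2pos := hMpos (p + 1 + 1)
        have hM1pos := hMpos (p + 1)
        field_simp
      have hfinal : ∑' j : ℕ, (l (j + (p + 1))) ^ 2 * r ^ 2 / (m (j + (p + 1))) ^ 2
          ≤ (m p) ^ 2 / (4 * m (p + 1)) * (A' * (p + 1) / m (p + 1)) := by
        rw [hts2] at hts
        refine le_trans hts ?_
        apply mul_le_mul_of_nonneg_left h3'
          (div_nonneg (sq_nonneg _) (mul_nonneg (by norm_num) (hmpos (p + 1)).le))
      refine le_trans (mul_le_mul_of_nonneg_left hfinal (by norm_num : (0:ℝ) ≤ 3/2)) ?_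
      have hmp1 : m p ≤ m (p + 1) := hmmono (by omega)
      have hmppos := hmpos p
      have hm1pos := hmpos (p + 1)
      have hq : (m p) ^ 2 / (4 * m (p + 1)) * (A' * (p + 1) / m (p + 1))
          = ((m p / m (p + 1)) ^ 2 / 4) * (A' * (p + 1)) := by
        field_simp
      have hle1 : (m p / m (p + 1)) ^ 2 ≤ 1 := by
        apply pow_le_one₀ (div_nonneg hmppos.le hm1pos.le)
        rw [div_le_one hm1pos]
        exact hmp1
      have hApos : (0:ℝ) ≤ A' * (p + 1) := by positivity
      calc (3 / 2) * ((m p) ^ 2 / (4 * m (p + 1)) * (A' * (p + 1) / m (p + 1)))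
          = (3 / 2) * (((m p / m (p + 1)) ^ 2 / 4) * (A' * (p + 1))) := by rw [hq]
        _ ≤ (3 / 2) * ((1 / 4) * (A' * (p + 1))) := by
            apply mul_le_mul_of_nonneg_left ?_ (by norm_num)
            apply mul_le_mul_of_nonneg_right ?_ hApos
            linarith
        _ ≤ A' * (p + 1) := by nlinarith
    have hprod : ∏ q ∈ Finset.range (p + 1), (1 + (l q) ^ 2 * r ^ 2 / (m q) ^ 2) ≤
        (K ^ p0 * 2 ^ (p + 1)) * ((m p) ^ (p + 1) / M (p + 1)) ^ 2 := by
      have step1 : ∏ q ∈ Finset.range (p + 1), (1 + (l q) ^ 2 * r ^ 2 / (m q) ^ 2)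
          ≤ ∏ q ∈ Finset.range (p + 1), ((if q < p0 then K else 2) * (m p / m q) ^ 2) := by
        apply Finset.prod_le_prod (fun q _ => by positivity)
        intro q hq
        rw [Finset.mem_range] at hq
        have hmq : m q ≤ m p := hmmono (by omega)
        have hmqpos := hmpos q
        have hmppos := hmpos p
        have hq1 : (1:ℝ) ≤ (m p / m q) ^ 2 := by
          apply one_le_pow₀
          rw [le_div_iff₀ hmqpos]
          linarith
        have hterm : (l q) ^ 2 * r ^ 2 / (m q) ^ 2 = (l q) ^ 2 / ε ^ 2 * (m p / m q) ^ 2 := by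
          rw [hrdef]
          ring
        by_cases hcase : q < p0
        · rw [if_pos hcase, hterm]
          have hle : (l q) ^ 2 / ε ^ 2 ≤ (l 0) ^ 2 / ε ^ 2 :=
            div_le_div₀ (sq_nonneg _) (pow_le_pow_left₀ (hlpos q).le (hlle q) 2)
              (by positivity) le_rfl
          nlinarith [mul_le_mul_of_nonneg_right hle (sq_nonneg (m p / m q)), hq1,
            mul_le_mul_of_nonneg_right hKbig (sq_nonneg (m p / m q))]
        · rw [if_neg hcase, hterm]
          have hlq : l q < ε / 2 := hp0 q (by omega)
          have hle : (l q) ^ 2 / ε ^ 2 ≤ 1 / 4 := by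
            rw [div_le_div_iff₀ (by positivity) (by norm_num)]
            nlinarith [mul_le_mul_of_nonneg_left hlq.le (hlpos q).le,
              mul_le_mul_of_nonneg_right hlq.le hε.le]
          nlinarith [mul_le_mul_of_nonneg_right hle (sq_nonneg (m p / m q)), hq1]
      have step2 : ∏ q ∈ Finset.range (p + 1), ((if q < p0 then K else (2:ℝ)) * (m p / m q) ^ 2)
          = (∏ q ∈ Finset.range (p + 1), (if q < p0 then K else (2:ℝ)))
            * ((m p) ^ (p + 1) / M (p + 1)) ^ 2 := by
        rw [Finset.prod_mul_distrib, Finset.prod_pow, Finset.prod_div_distrib,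
          Finset.prod_const, Finset.card_range, hMprod (p + 1)]
      have step3 : (∏ q ∈ Finset.range (p + 1), (if q < p0 then K else (2:ℝ)))
          ≤ K ^ p0 * 2 ^ (p + 1) := by
        rw [Finset.range_eq_Ico,
          ← Finset.prod_Ico_consecutive _ (Nat.zero_le p0) (show p0 ≤ p + 1 by omega)]
        have hb1 : (∏ q ∈ Finset.Ico 0 p0, (if q < p0 then K else (2:ℝ))) ≤ K ^ p0 := by
          calc (∏ q ∈ Finset.Ico 0 p0, (if q < p0 then K else (2:ℝ)))
              ≤ ∏ _q ∈ Finset.Ico 0 p0, K := by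
                apply Finset.prod_le_prod
                · intro q _
                  split <;> positivity
                · intro q hq
                  rw [Finset.mem_Ico] at hq
                  rw [if_pos hq.2]
            _ = K ^ p0 := by rw [Finset.prod_const, Nat.card_Ico, Nat.sub_zero]
        have hb2 : (∏ q ∈ Finset.Ico p0 (p + 1), (if q < p0 then K else (2:ℝ)))
            ≤ 2 ^ (p + 1) := by
          calc (∏ q ∈ Finset.Ico p0 (p + 1), (if q < p0 then K else (2:ℝ)))
              = ∏ _q ∈ Finset.Ico p0 (p + 1), (2:ℝ) := by
                apply Finset.prod_congr rfl
                intro q hq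
                rw [Finset.mem_Ico] at hq
                rw [if_neg (by omega)]
            _ = 2 ^ (p + 1 - p0) := by rw [Finset.prod_const, Nat.card_Ico]
            _ ≤ 2 ^ (p + 1) := pow_le_pow_right₀ one_le_two (by omega)
        have hpos1 : (0:ℝ) ≤ ∏ q ∈ Finset.Ico p0 (p + 1), (if q < p0 then K else (2:ℝ)) :=
          Finset.prod_nonneg fun q _ => by split <;> positivity
        exact mul_le_mul hb1 hb2 hpos1 (by positivity)
      calc ∏ q ∈ Finset.range (p + 1), (1 + (l q) ^ 2 * r ^ 2 / (m q) ^ 2)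
          ≤ ∏ q ∈ Finset.range (p + 1), ((if q < p0 then K else (2:ℝ)) * (m p / m q) ^ 2) := step1
        _ = (∏ q ∈ Finset.range (p + 1), (if q < p0 then K else (2:ℝ)))
            * ((m p) ^ (p + 1) / M (p + 1)) ^ 2 := step2
        _ ≤ (K ^ p0 * 2 ^ (p + 1)) * ((m p) ^ (p + 1) / M (p + 1)) ^ 2 :=
            mul_le_mul_of_nonneg_right step3 (by positivity)
    have hsphere : ∀ ζ : ℂ, ‖ζ‖ = r → ‖P ζ‖ ≤ B := by
      intro ζ hζ
      have hk1 := key (p + 1) ζ (by rw [hζ]; exact hyp)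
      rw [hζ] at hk1
      refine le_trans hk1 ?_
      rw [hBdef, ← hbridge]
      apply mul_le_mul hprod (Real.exp_le_exp.2 htail) (Real.exp_pos _).le (by positivity)
    have hiter := aux_cauchy P hdiff hr B hsphere p
    have hfacpos : (0:ℝ) < (p.factorial : ℝ) := by exact_mod_cast p.factorial_pos
    have hap : ‖a p‖ ≤ B / r ^ p := by
      rw [ha p, norm_div, Complex.norm_natCast]
      calc ‖iteratedDeriv p P 0‖ / (p.factorial : ℝ)
          ≤ ((p.factorial : ℝ) * B / r ^ p) / (p.factorial : ℝ) := by gcongr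
        _ = B / r ^ p := by
            rw [mul_div_assoc]
            exact mul_div_cancel_left₀ _ (ne_of_gt hfacpos)
    have hmpp : (m p) ^ p ≤ A * H ^ (2 * p) * M p := by
      have hIco : M p * ∏ q ∈ Finset.Ico p (2 * p), m q = M (2 * p) := by
        rw [hMprod p, hMprod (2 * p), Finset.range_eq_Ico, Finset.range_eq_Ico]
        exact Finset.prod_Ico_consecutive _ (Nat.zero_le p) (show p ≤ 2 * p by omega)
      have h1 : (m p) ^ p ≤ ∏ q ∈ Finset.Ico p (2 * p), m q := by
        have hcard : (m p) ^ p = ∏ _q ∈ Finset.Ico p (2 * p), m p := by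
          rw [Finset.prod_const, Nat.card_Ico]
          congr 1
          omega
        rw [hcard]
        apply Finset.prod_le_prod (fun q _ => (hmpos p).le)
        intro q hq
        rw [Finset.mem_Ico] at hq
        exact hmmono hq.1
      have h2' := h2 (2 * p) p (by omega)
      rw [show 2 * p - p = p by omega] at h2'
      have h4 : (m p) ^ p * M p ≤ (A * H ^ (2 * p) * M p) * M p := by
        calc (m p) ^ p * M p ≤ (∏ q ∈ Finset.Ico p (2 * p), m q) * M p :=
              mul_le_mul_of_nonneg_right h1 (hMpos p).le
          _ = M (2 * p) := by rw [mul_comm]; exact hIco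
          _ ≤ (A * H ^ (2 * p) * M p) * M p := h2'
      exact le_of_mul_le_mul_right h4 (hMpos p)
    have hEq : B / r ^ p = (K ^ p0 * 2 ^ (p + 1) * Real.exp (A' * (p + 1)))
        * (ε ^ p * ((m p) ^ p / (M p) ^ 2)) := by
      have h5 : m p ≠ 0 := ne_of_gt (hmpos p)
      have h6 : M p ≠ 0 := ne_of_gt (hMpos p)
      have h7 : ε ≠ 0 := ne_of_gt hε
      have hrp : r ^ p = (m p) ^ p / ε ^ p := by rw [hrdef, div_pow]
      rw [hBdef, hrp, div_div_eq_mul_div, div_pow]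
      field_simp
    have hEexp : Real.exp (A' * (p + 1)) = Real.exp A' * Real.exp A' ^ p := by
      rw [show A' * ((p:ℝ) + 1) = A' + (p:ℝ) * A' by ring, Real.exp_add, Real.exp_nat_mul]
    calc ‖a p‖ ≤ B / r ^ p := hap
      _ = (K ^ p0 * 2 ^ (p + 1) * Real.exp (A' * (p + 1)))
          * (ε ^ p * ((m p) ^ p / (M p) ^ 2)) := hEq
      _ ≤ (K ^ p0 * 2 ^ (p + 1) * Real.exp (A' * (p + 1)))
          * (ε ^ p * ((A * H ^ (2 * p) * M p) / (M p) ^ 2)) := by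
          have := hMpos p
          gcongr
      _ = C1 * (E * ε) ^ p / M p := by
          rw [hC1def, hEdef, hEexp]
          have h6 := hMpos p
          field_simp
          ring
      _ ≤ C1 * k ^ p / M p := by
          have h8 : (E * ε) ^ p ≤ k ^ p := pow_le_pow_left₀ (by positivity) hEk p
          exact div_le_div₀ (by positivity) (mul_le_mul_of_nonneg_left h8 hC1.le)
            (hMpos p) le_rfl
  -- assemble the constant
  set S : ℝ := ∑ q ∈ Finset.range p0, ‖a q‖ * M q / k ^ q with hSdef
  have hS : 0 ≤ S := Finset.sum_nonneg fun q _ =>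
    div_nonneg (mul_nonneg (norm_nonneg _) (hMpos q).le) (pow_pos hk q).le
  refine ⟨C1 + S + 1, by linarith, ?_⟩
  intro p
  rcases le_or_gt p0 p with hcase | hcase
  · refine le_trans (main p hcase) ?_
    gcongr
    · exact (hMpos p).le
    · linarith
  · have hterm : ‖a p‖ * M p / k ^ p ≤ S := by
      rw [hSdef]
      exact Finset.single_le_sum (f := fun q => ‖a q‖ * M q / k ^ q)
        (fun q _ => div_nonneg (mul_nonneg (norm_nonneg _) (hMpos q).le)
          (pow_pos hk q).le) (Finset.mem_range.2 hcase)
    rw [div_le_iff₀ (pow_pos hk p)] at hterm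
    rw [le_div_iff₀ (hMpos p)]
    calc ‖a p‖ * M p ≤ S * k ^ p := hterm
      _ ≤ (C1 + S + 1) * k ^ p := mul_le_mul_of_nonneg_right (by linarith) (pow_pos hk p).le
end

section
/- Let L > 0, ā > 0 with L·ā < m_1, and define P_L(ζ) := ∏_{p=1}^∞ (1 + L²ζ²/m_p²) for ζ ∈ ℂ. Then: (i) the function s ↦ 1/P_L(s − i·ā) is Lebesgue integrable on ℝ (in particular P_L(s − i·ā) ≠ 0 for all real s); (ii) the function K : ℝ → ℂ defined by K(t) := (1/(2π)) ∫_ℝ e^{(ā + i·s)·t} / P_L(s − i·ā) ds is continuous; and (iii) |K(t)| ≤ C·e^{ā·t} for all t ∈ ℝ, where C := (1/(2π)) ∫_ℝ 1/|P_L(s − i·ā)| ds. -/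
open MeasureTheory

/-- The canonical product `P_L(ζ) := ∏_{p=1}^∞ (1 + L²ζ²/m_p²)`, where `m p` denotes
`m_{p+1}`. -/
noncomputable def PL (m : ℕ → ℝ) (L : ℝ) (ζ : ℂ) : ℂ :=
  ∏' p : ℕ, (1 + (L : ℂ) ^ 2 * ζ ^ 2 / (m p : ℂ) ^ 2)

private lemma hasProd_le_nonneg {f g : ℕ → ℝ} {a b : ℝ} (h0 : ∀ i, 0 ≤ g i)
    (hle : ∀ i, g i ≤ f i) (hg : HasProd g a) (hf : HasProd f b) : a ≤ b :=
  le_of_tendsto_of_tendsto' hg hf fun s =>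
    Finset.prod_le_prod (fun i _ => h0 i) (fun i _ => hle i)

set_option maxHeartbeats 1000000 in
/-- Let `(m_p)_{p≥1}` be a nondecreasing sequence of positive reals with `∑ 1/m_p² < ∞`
(here `m p` denotes `m_{p+1}`).  Let `L > 0` and `ā > 0` with `L·ā < m_1`, and set
`P_L(ζ) := ∏_{p=1}^∞ (1 + L²ζ²/m_p²)`.  Then:
(i) `s ↦ 1/P_L(s − i·ā)` is Lebesgue integrable on `ℝ` (in particular `P_L(s − i·ā) ≠ 0`
for all real `s`);
(ii) `K(t) := (1/(2π)) ∫_ℝ e^{(ā + i·s)·t} / P_L(s − i·ā) ds` is continuous on `ℝ`;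
(iii) `|K(t)| ≤ C·e^{ā·t}` for all `t`, where `C := (1/(2π)) ∫_ℝ 1/|P_L(s − i·ā)| ds`. -/
theorem inverse_laplace_kernel_of_canonical_product
    (m : ℕ → ℝ) (hmpos : ∀ p, 0 < m p) (hmmono : Monotone m)
    (hmsum : Summable fun p => 1 / (m p) ^ 2)
    (L abar : ℝ) (hL : 0 < L) (habar : 0 < abar) (hLa : L * abar < m 0) :
    (Integrable (fun s : ℝ => 1 / PL m L ((s : ℂ) - Complex.I * (abar : ℂ)))) ∧
    (∀ s : ℝ, PL m L ((s : ℂ) - Complex.I * (abar : ℂ)) ≠ 0) ∧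
    (Continuous fun t : ℝ =>
      (1 / (2 * Real.pi) : ℂ) *
        ∫ s : ℝ, Complex.exp (((abar : ℂ) + Complex.I * (s : ℂ)) * (t : ℂ)) /
          PL m L ((s : ℂ) - Complex.I * (abar : ℂ))) ∧
    (∀ t : ℝ,
      ‖((1 / (2 * Real.pi) : ℂ) *
          ∫ s : ℝ, Complex.exp (((abar : ℂ) + Complex.I * (s : ℂ)) * (t : ℂ)) /
            PL m L ((s : ℂ) - Complex.I * (abar : ℂ)))‖ ≤
        (1 / (2 * Real.pi) *
            ∫ s : ℝ, 1 / ‖PL m L ((s : ℂ) - Complex.I * (abar : ℂ))‖) *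
          Real.exp (abar * t)) := by
  classical
  -- basic positivity facts
  have hm0 : ∀ p, 0 < m p := hmpos
  have hmne : ∀ p, (m p : ℝ) ≠ 0 := fun p => (hm0 p).ne'
  have hmcne : ∀ p, (m p : ℂ) ≠ 0 := fun p => by exact_mod_cast hmne p
  -- the factors
  set f : ℕ → ℝ → ℂ :=
    fun p s => 1 + (L : ℂ) ^ 2 * ((s : ℂ) - Complex.I * (abar : ℂ)) ^ 2 / (m p : ℂ) ^ 2 with hfdef
  have hPL : ∀ s : ℝ, PL m L ((s : ℂ) - Complex.I * (abar : ℂ)) = ∏' p, f p s := fun s => rfl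
  -- real part of each factor
  have hre : ∀ p (s : ℝ), (f p s).re = 1 - (L * abar / m p) ^ 2 + (L * s / m p) ^ 2 := by
    intro p s
    have h : f p s = ((1 - (L * abar / m p) ^ 2 + (L * s / m p) ^ 2 : ℝ) : ℂ)
        + ((-2 * L ^ 2 * s * abar / (m p) ^ 2 : ℝ) : ℂ) * Complex.I := by
      rw [hfdef]
      have hmpc := hmcne p
      field_simp
      ring_nf
      simp [Complex.I_sq]
      have hm2 : (m p : ℂ) ^ 2 * ((m p : ℂ)⁻¹) ^ 2 = 1 := by
        rw [← mul_pow, mul_inv_cancel₀ hmpc, one_pow]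
      linear_combination (2 * (L : ℂ) ^ 2 * s * Complex.I * abar - (L : ℂ) ^ 2 * s ^ 2
        + (L : ℂ) ^ 2 * abar ^ 2) * hm2
    rw [h, Complex.add_re, Complex.ofReal_re, Complex.mul_re, Complex.ofReal_re,
      Complex.ofReal_im, Complex.I_re, Complex.I_im]
    ring
  -- x p = (L abar / m p)^2 < 1
  have hxlt : ∀ p, (L * abar / m p) ^ 2 < 1 := by
    intro p
    have h1 : 0 < L * abar := mul_pos hL habar
    have h2 : L * abar < m p := lt_of_lt_of_le hLa (hmmono (Nat.zero_le p))
    have h3 : L * abar / m p < 1 := (div_lt_one (hm0 p)).2 h2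
    have h4 : 0 ≤ L * abar / m p := le_of_lt (div_pos h1 (hm0 p))
    nlinarith
  have hxnonneg : ∀ p, (0:ℝ) ≤ (L * abar / m p) ^ 2 := fun p => sq_nonneg _
  -- real part positive
  have hrepos : ∀ p (s : ℝ), 0 < (f p s).re := by
    intro p s
    rw [hre]
    have := hxlt p
    have := sq_nonneg (L * s / m p)
    linarith
  have hne : ∀ p (s : ℝ), f p s ≠ 0 := by
    intro p s h
    have := hrepos p s
    rw [h] at this
    simp at this
  -- summability of the norms of u p s
  have hnormu : ∀ p (s : ℝ),
      ‖(L : ℂ) ^ 2 * ((s : ℂ) - Complex.I * (abar : ℂ)) ^ 2 / (m p : ℂ) ^ 2‖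
        = (L ^ 2 * ‖(s : ℂ) - Complex.I * (abar : ℂ)‖ ^ 2) * (1 / (m p) ^ 2) := by
    intro p s
    simp [norm_mul, norm_div, norm_pow, abs_of_pos hL, abs_of_pos (hm0 p)]
    ring
  have hsumu : ∀ s : ℝ, Summable fun p =>
      ‖(L : ℂ) ^ 2 * ((s : ℂ) - Complex.I * (abar : ℂ)) ^ 2 / (m p : ℂ) ^ 2‖ := by
    intro s
    exact (hmsum.mul_left _).congr fun p => (hnormu p s).symm
  -- summability of complex logs
  have hlogsum : ∀ s : ℝ, Summable fun p => Complex.log (f p s) := by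
    intro s
    have hev : ∀ᶠ p in Filter.atTop,
        ‖(L : ℂ) ^ 2 * ((s : ℂ) - Complex.I * (abar : ℂ)) ^ 2 / (m p : ℂ) ^ 2‖ ≤ 1/2 :=
      (hsumu s).tendsto_atTop_zero.eventually_le_const (by norm_num)
    apply Summable.of_norm_bounded_eventually
      ((hsumu s).mul_left (3/2))
    rw [Nat.cofinite_eq_atTop]
    filter_upwards [hev] with p hp
    exact Complex.norm_log_one_add_half_le_self hp
  -- multipliability of the complex factors
  have hMc : ∀ s : ℝ, Multipliable fun p => f p s := by
    intro s
    exact Complex.multipliable_of_summable_log (hlogsum s)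
  -- the real lower-bound sequence
  set δ : ℕ → ℝ := fun p => 1 - (L * abar / m p) ^ 2 with hδdef
  have hδpos : ∀ p, 0 < δ p := fun p => by have := hxlt p; simp only [hδdef]; linarith
  have hδle1 : ∀ p, δ p ≤ 1 := fun p => by have := hxnonneg p; simp only [hδdef]; linarith
  -- summability of x p
  have hxsum : Summable fun p => (L * abar / m p) ^ 2 := by
    apply (hmsum.mul_left ((L * abar) ^ 2)).congr
    intro p
    rw [div_pow]
    ring
  -- summability of real logs of δ
  have hδlogsum : Summable fun p => Real.log (δ p) := by
    have hev : ∀ᶠ p in Filter.atTop, (L * abar / m p) ^ 2 ≤ 1/2 :=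
      hxsum.tendsto_atTop_zero.eventually_le_const (by norm_num)
    apply Summable.of_norm_bounded_eventually
      (hxsum.mul_left (3/2))
    rw [Nat.cofinite_eq_atTop]
    filter_upwards [hev] with p hp
    have h0 : (0:ℝ) ≤ δ p := (hδpos p).le
    have hc : ((Real.log (δ p) : ℝ) : ℂ) = Complex.log (1 + ((-((L * abar / m p) ^ 2) : ℝ) : ℂ)) := by
      rw [Complex.ofReal_log h0]
      congr 1
      push_cast [hδdef]
      ring
    have : ‖Real.log (δ p)‖ = ‖Complex.log (1 + ((-((L * abar / m p) ^ 2) : ℝ) : ℂ))‖ := by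
      rw [← hc, Complex.norm_real]
    rw [this]
    have hz : ‖((-((L * abar / m p) ^ 2) : ℝ) : ℂ)‖ ≤ 1/2 := by
      rw [Complex.norm_real, Real.norm_eq_abs, abs_neg, abs_of_nonneg (hxnonneg p)]
      exact hp
    calc ‖Complex.log (1 + ((-((L * abar / m p) ^ 2) : ℝ) : ℂ))‖
        ≤ 3/2 * ‖((-((L * abar / m p) ^ 2) : ℝ) : ℂ)‖ :=
          Complex.norm_log_one_add_half_le_self hz
      _ = 3/2 * (L * abar / m p) ^ 2 := by
          rw [Complex.norm_real, Real.norm_eq_abs, abs_neg, abs_of_nonneg (hxnonneg p)]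
  set Sδ : ℝ := ∑' p, Real.log (δ p) with hSδdef
  set D : ℝ := Real.exp Sδ with hDdef
  have hDpos : 0 < D := Real.exp_pos _
  -- the auxiliary function h1
  set h1 : ℝ → ℝ := fun s => 1 + (L * s / m 1) ^ 2 with hh1def
  have hh1pos : ∀ s, 0 < h1 s := fun s => by have := sq_nonneg (L * s / m 1); simp only [hh1def]; linarith
  have hh1ge1 : ∀ s, 1 ≤ h1 s := fun s => by have := sq_nonneg (L * s / m 1); simp only [hh1def]; linarith
  -- the lower bound sequence g
  set g : ℕ → ℝ → ℝ := fun p s => δ p * (if p ≤ 1 then h1 s else 1) with hgdef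
  have hgpos : ∀ p s, 0 < g p s := by
    intro p s
    simp only [hgdef]
    by_cases hp : p ≤ 1 <;> simp [hp, mul_pos (hδpos p) (hh1pos s), hδpos p]
  have hglog : ∀ p (s : ℝ), Real.log (g p s)
      = Real.log (δ p) + (if p ≤ 1 then Real.log (h1 s) else 0) := by
    intro p s
    simp only [hgdef]
    by_cases hp : p ≤ 1
    · simp [hp, Real.log_mul (hδpos p).ne' (hh1pos s).ne']
    · simp [hp]
  have hitesum : ∀ s : ℝ, Summable fun p : ℕ => (if p ≤ 1 then Real.log (h1 s) else 0) := by
    intro s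
    apply summable_of_ne_finset_zero (s := {0, 1})
    intro p hp
    have : ¬ p ≤ 1 := by
      simp only [Finset.mem_insert, Finset.mem_singleton] at hp
      omega
    simp [this]
  have hglogsum : ∀ s : ℝ, Summable fun p => Real.log (g p s) := by
    intro s
    exact ((hδlogsum.add (hitesum s))).congr fun p => (hglog p s).symm
  -- value of the tsum of logs of g
  have hgtsum : ∀ s : ℝ, ∑' p, Real.log (g p s) = Sδ + 2 * Real.log (h1 s) := by
    intro s
    calc ∑' p, Real.log (g p s)
        = ∑' p, (Real.log (δ p) + (if p ≤ 1 then Real.log (h1 s) else 0)) :=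
          tsum_congr fun p => hglog p s
      _ = Sδ + ∑' p : ℕ, (if p ≤ 1 then Real.log (h1 s) else 0) :=
          Summable.tsum_add hδlogsum (hitesum s)
      _ = Sδ + 2 * Real.log (h1 s) := by
          congr 1
          rw [tsum_eq_sum (s := {0, 1}) (by
            intro p hp
            have : ¬ p ≤ 1 := by
              simp only [Finset.mem_insert, Finset.mem_singleton] at hp
              omega
            simp [this])]
          norm_num
          ring
  -- g has a product equal to D * (h1 s)^2
  have hG : ∀ s : ℝ, HasProd (fun p => g p s) (D * (h1 s) ^ 2) := by
    intro s
    have hmul : Multipliable fun p => g p s :=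
      Real.multipliable_of_summable_log (fun p => hgpos p s) (hglogsum s)
    have heq : (∏' p, g p s) = D * (h1 s) ^ 2 := by
      have := Real.rexp_tsum_eq_tprod (fun p => hgpos p s) (hglogsum s)
      rw [← this, hgtsum s, Real.exp_add, hDdef]
      congr 1
      rw [two_mul, Real.exp_add, Real.exp_log (hh1pos s), sq]
    rw [← heq]
    exact hmul.hasProd
  -- pointwise comparison : g p s ≤ |f p s|
  have hcomp : ∀ p (s : ℝ), g p s ≤ ‖f p s‖ := by
    intro p s
    have h1' : (f p s).re ≤ ‖f p s‖ := Complex.re_le_norm _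
    rw [hre p s] at h1'
    refine le_trans ?_ h1'
    simp only [hgdef, hh1def]
    by_cases hp : p ≤ 1
    · simp only [if_pos hp]
      have hy : (L * s / m 1) ^ 2 ≤ (L * s / m p) ^ 2 := by
        rw [div_pow, div_pow]
        apply div_le_div_of_nonneg_left (sq_nonneg _) (pow_pos (hm0 p) 2)
        have : m p ≤ m 1 := hmmono hp
        nlinarith [hm0 p, hm0 1]
      have hδ1 := hδle1 p
      have hδ0 := (hδpos p).le
      have hy1 : (0:ℝ) ≤ (L * s / m 1) ^ 2 := sq_nonneg _
      simp only [hδdef] at hδ1 hδ0 ⊢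
      nlinarith
    · simp only [if_neg hp, mul_one]
      have := sq_nonneg (L * s / m p)
      simp only [hδdef]
      linarith
  -- the key lower bound
  have hlow : ∀ s : ℝ, D * (h1 s) ^ 2 ≤ ‖PL m L ((s : ℂ) - Complex.I * (abar : ℂ))‖ := by
    intro s
    rw [hPL s, (hMc s).norm_tprod]
    exact hasProd_le_nonneg (fun p => (hgpos p s).le) (fun p => hcomp p s) (hG s)
      (hMc s).norm.hasProd
  have hDh1pos : ∀ s : ℝ, 0 < D * (h1 s) ^ 2 := fun s => by positivity
  have hPpos : ∀ s : ℝ, 0 < ‖PL m L ((s : ℂ) - Complex.I * (abar : ℂ))‖ :=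
    fun s => lt_of_lt_of_le (hDh1pos s) (hlow s)
  have hPne : ∀ s : ℝ, PL m L ((s : ℂ) - Complex.I * (abar : ℂ)) ≠ 0 := by
    intro s h
    have := hPpos s
    rw [h] at this
    simp at this
  -- the integrable bound
  set b : ℝ := (L / m 1) ^ 2 with hbdef
  have hbpos : 0 < b := pow_pos (div_pos hL (hm0 1)) 2
  set c : ℝ := max 1 (1 / b) with hcdef
  have hc1 : (1:ℝ) ≤ c := le_max_left _ _
  have hcb : 1 ≤ c * b := by
    have : 1 / b ≤ c := le_max_right _ _
    calc (1:ℝ) = (1/b) * b := by field_simp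
      _ ≤ c * b := by nlinarith
  have hh1eq : ∀ s : ℝ, h1 s = 1 + b * s ^ 2 := by
    intro s
    simp only [hh1def, hbdef]
    rw [div_pow, div_pow]
    ring
  have hBbound : ∀ s : ℝ, 1 / ‖PL m L ((s : ℂ) - Complex.I * (abar : ℂ))‖
      ≤ (c / D) * (1 + s ^ 2)⁻¹ := by
    intro s
    have h2 : 1 / ‖PL m L ((s : ℂ) - Complex.I * (abar : ℂ))‖ ≤ 1 / (D * (h1 s) ^ 2) :=
      one_div_le_one_div_of_le (hDh1pos s) (hlow s)
    refine le_trans h2 ?_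
    rw [hh1eq s]
    have hs2 : (0:ℝ) ≤ s ^ 2 := sq_nonneg s
    have hden1 : (0:ℝ) < 1 + b * s ^ 2 := by nlinarith
    have h1q : (1:ℝ) ≤ 1 + b * s ^ 2 := by nlinarith
    have hsq : (1 + b * s ^ 2) ≤ (1 + b * s ^ 2) ^ 2 := by
      calc 1 + b * s ^ 2 = (1 + b * s ^ 2) * 1 := by ring
        _ ≤ (1 + b * s ^ 2) * (1 + b * s ^ 2) :=
            mul_le_mul_of_nonneg_left h1q hden1.le
        _ = (1 + b * s ^ 2) ^ 2 := by ring
    have h3 : 1 / (D * (1 + b * s ^ 2) ^ 2) ≤ 1 / (D * (1 + b * s ^ 2)) := by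
      apply one_div_le_one_div_of_le (by positivity)
      exact mul_le_mul_of_nonneg_left hsq hDpos.le
    refine le_trans h3 ?_
    have hrw : (c / D) * (1 + s ^ 2)⁻¹ = c / (D * (1 + s ^ 2)) := by
      rw [← div_eq_mul_inv, div_div]
    have hkey : (1 + s ^ 2) ≤ c * (1 + b * s ^ 2) := by
      nlinarith [mul_nonneg (by linarith : (0:ℝ) ≤ c * b - 1) hs2]
    rw [hrw, div_le_div_iff₀ (by positivity) (by positivity)]
    calc 1 * (D * (1 + s ^ 2)) = D * (1 + s ^ 2) := by ring
      _ ≤ D * (c * (1 + b * s ^ 2)) := mul_le_mul_of_nonneg_left hkey hDpos.le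
      _ = c * (D * (1 + b * s ^ 2)) := by ring
  -- measurability of P along the line
  have hcontfin : ∀ n : ℕ, Continuous fun s : ℝ => ∏ p ∈ Finset.range n, f p s := by
    intro n
    apply continuous_finset_prod
    intro p _
    simp only [hfdef]
    fun_prop
  have hPmeas : Measurable fun s : ℝ => PL m L ((s : ℂ) - Complex.I * (abar : ℂ)) := by
    apply measurable_of_tendsto_metrizable' (u := Filter.atTop)
      (f := fun n (s : ℝ) => ∏ p ∈ Finset.range n, f p s)
    · exact fun n => (hcontfin n).measurable
    · rw [tendsto_pi_nhds]
      intro s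
      rw [hPL s]
      exact (hMc s).hasProd.tendsto_prod_nat
  have hmeasinv : AEStronglyMeasurable
      (fun s : ℝ => 1 / PL m L ((s : ℂ) - Complex.I * (abar : ℂ))) volume := by
    simp only [one_div]
    exact (hPmeas.inv).aestronglyMeasurable
  -- part (i)
  have hBint : Integrable (fun s : ℝ => (c / D) * (1 + s ^ 2)⁻¹) :=
    integrable_inv_one_add_sq.const_mul _
  have hInt1 : Integrable (fun s : ℝ => 1 / PL m L ((s : ℂ) - Complex.I * (abar : ℂ))) := by
    apply Integrable.mono' hBint hmeasinv
    refine Filter.Eventually.of_forall fun s => ?_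
    simp only [norm_div, norm_one]
    exact hBbound s
  have hIntabs : Integrable
      (fun s : ℝ => 1 / ‖PL m L ((s : ℂ) - Complex.I * (abar : ℂ))‖) := by
    apply hInt1.norm.congr
    refine Filter.Eventually.of_forall fun s => ?_
    simp only [norm_div, norm_one]
  -- norm of the integrand
  have hnorm : ∀ t s : ℝ,
      ‖Complex.exp (((abar : ℂ) + Complex.I * (s : ℂ)) * (t : ℂ)) /
          PL m L ((s : ℂ) - Complex.I * (abar : ℂ))‖
        = Real.exp (abar * t) *
            (1 / ‖PL m L ((s : ℂ) - Complex.I * (abar : ℂ))‖) := by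
    intro t s
    rw [norm_div, Complex.norm_exp]
    have hre' : ((((abar : ℂ) + Complex.I * (s : ℂ)) * (t : ℂ))).re = abar * t := by
      simp [Complex.mul_re, Complex.add_re, Complex.add_im]
    rw [hre', mul_one_div]
  have hcst : ‖(1 / (2 * Real.pi) : ℂ)‖ = 1 / (2 * Real.pi) := by
    rw [show ((1 / (2 * Real.pi) : ℂ)) = ((1 / (2 * Real.pi) : ℝ) : ℂ) by push_cast; ring,
      Complex.norm_real, Real.norm_eq_abs, abs_of_pos (by positivity)]
  have hcstpos : (0:ℝ) ≤ 1 / (2 * Real.pi) := by positivity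
  -- part (ii)
  have hcontK : Continuous fun t : ℝ =>
      (1 / (2 * Real.pi) : ℂ) *
        ∫ s : ℝ, Complex.exp (((abar : ℂ) + Complex.I * (s : ℂ)) * (t : ℂ)) /
          PL m L ((s : ℂ) - Complex.I * (abar : ℂ)) := by
    refine continuous_const.mul ?_
    rw [continuous_iff_continuousAt]
    intro t₀
    apply continuousAt_of_dominated (bound := fun s : ℝ =>
      Real.exp (abar * (t₀ + 1)) * (1 / ‖PL m L ((s : ℂ) - Complex.I * (abar : ℂ))‖))
    · refine Filter.Eventually.of_forall fun t => ?_
      have hexpc : Continuous fun s : ℝ =>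
          Complex.exp (((abar : ℂ) + Complex.I * (s : ℂ)) * (t : ℂ)) := by fun_prop
      have heq : (fun s : ℝ => Complex.exp (((abar : ℂ) + Complex.I * (s : ℂ)) * (t : ℂ)) /
            PL m L ((s : ℂ) - Complex.I * (abar : ℂ)))
          = fun s : ℝ => Complex.exp (((abar : ℂ) + Complex.I * (s : ℂ)) * (t : ℂ)) *
            (PL m L ((s : ℂ) - Complex.I * (abar : ℂ)))⁻¹ :=
        funext fun s => div_eq_mul_inv _ _
      rw [heq]
      exact hexpc.aestronglyMeasurable.mul (hPmeas.inv).aestronglyMeasurable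
    · filter_upwards [Iio_mem_nhds (lt_add_one t₀)] with t ht
      refine Filter.Eventually.of_forall fun s => ?_
      rw [hnorm t s]
      apply mul_le_mul_of_nonneg_right
      · exact Real.exp_le_exp.2 (mul_le_mul_of_nonneg_left (le_of_lt ht) habar.le)
      · exact le_of_lt (div_pos one_pos (hPpos s))
    · exact hIntabs.const_mul _
    · refine Filter.Eventually.of_forall fun s => ?_
      have : Continuous fun t : ℝ =>
          Complex.exp (((abar : ℂ) + Complex.I * (s : ℂ)) * (t : ℂ)) /
            PL m L ((s : ℂ) - Complex.I * (abar : ℂ)) := by fun_prop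
      exact this.continuousAt
  refine ⟨hInt1, hPne, hcontK, ?_⟩
  -- part (iii)
  intro t
  rw [norm_mul, hcst]
  calc (1 / (2 * Real.pi)) *
        ‖∫ s : ℝ, Complex.exp (((abar : ℂ) + Complex.I * (s : ℂ)) * (t : ℂ)) /
          PL m L ((s : ℂ) - Complex.I * (abar : ℂ))‖
      ≤ (1 / (2 * Real.pi)) *
        ∫ s : ℝ, ‖Complex.exp (((abar : ℂ) + Complex.I * (s : ℂ)) * (t : ℂ)) /
          PL m L ((s : ℂ) - Complex.I * (abar : ℂ))‖ := by
        apply mul_le_mul_of_nonneg_left _ hcstpos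
        exact norm_integral_le_integral_norm _
    _ = (1 / (2 * Real.pi)) *
        ∫ s : ℝ, Real.exp (abar * t) *
          (1 / ‖PL m L ((s : ℂ) - Complex.I * (abar : ℂ))‖) := by
        congr 1
        exact integral_congr_ae (Filter.Eventually.of_forall fun s => hnorm t s)
    _ = (1 / (2 * Real.pi)) * (Real.exp (abar * t) *
          ∫ s : ℝ, 1 / ‖PL m L ((s : ℂ) - Complex.I * (abar : ℂ))‖) := by
        rw [integral_const_mul]
    _ = (1 / (2 * Real.pi) *
          ∫ s : ℝ, 1 / ‖PL m L ((s : ℂ) - Complex.I * (abar : ℂ))‖) *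
          Real.exp (abar * t) := by ring
end
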